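/- arXiv:2402.08340 — 5 statements merged into one kernel-verified Lean document; each statement's English description precedes it below -/
import Mathlib

section
/- Let a, r ∈ ℕ and k ∈ ℤ. Then q^{-ra(a+1)/2}·𝒜_{a,k,r}(q) = ∏_{n≥1} 1/((1−q^{rn})(1−q^n)^k) + O(q^{a+1}); that is, for every integer 0 ≤ m ≤ a, the coefficient c_{a,k,r}(m + ra(a+1)/2) equals the coefficient of q^m in the formal power series ∏_{n≥1} (1−q^{rn})^{-1}(1−q^n)^{-k}. -/
open PowerSeries Finset
open scoped Classical

noncomputable section

/-- `(1 - q^n)^(-k)` in `ℚ⟦q⟧`, for `k : ℤ` (for negative `k` this is the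
power `(1 - q^n)^{|k|}`). -/
def dFac (n : ℕ) (k : ℤ) : PowerSeries ℚ :=
  if 0 ≤ k then ((1 - (X : PowerSeries ℚ) ^ n)⁻¹) ^ k.toNat
  else (1 - (X : PowerSeries ℚ) ^ n) ^ (-k).toNat

/-- Strictly increasing `a`-tuples `1 ≤ n₁ < n₂ < ⋯ < n_a ≤ N`. -/
def strictTuples (a N : ℕ) : Finset (Fin a → ℕ) :=
  (Fintype.piFinset fun _ : Fin a => Finset.Icc 1 N).filter fun f => StrictMono f

/-- The coefficient `c_{a,k,r}(N)` of `q^N` in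
`𝒜_{a,k,r}(q) = Σ_{1≤n₁<⋯<n_a} q^{r(n₁+⋯+n_a)} / ∏_j (1-q^{n_j})^k`.
Since `r ≥ 1`, tuples containing an entry `> N` contribute `0` to the coefficient of `q^N`,
so the (q-adically convergent) infinite sum can be truncated to entries in `[1, N]`. -/
def Acoeff (a : ℕ) (k : ℤ) (r : ℕ) (N : ℕ) : ℚ :=
  ∑ f ∈ strictTuples a N,
    PowerSeries.coeff (R := ℚ) N ((X : PowerSeries ℚ) ^ (r * ∑ j, f j) * ∏ j, dFac (f j) k)

namespace EtaAux

/-! ### Counting helpers -/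

lemma count_ite (a b x : ℕ) (hb : b ≤ a) :
    ∑ j : Fin a, (if a ≤ b + (j : ℕ) then x else 0) = b * x := by
  rw [Fin.sum_univ_eq_sum_range (fun t => if a ≤ b + t then x else 0) a, ← Finset.sum_filter]
  have h : (Finset.range a).filter (fun t => a ≤ b + t) = Finset.Ico (a - b) a := by
    ext t
    simp only [Finset.mem_filter, Finset.mem_range, Finset.mem_Ico]
    omega
  rw [h, Finset.sum_const, Nat.card_Ico, smul_eq_mul]
  congr 1
  omega

/-- From multiplicities `c` of parts, build the nondecreasing `a`-tuple whose nonzero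
entries are the parts (with parts `n ∈ [1,m]`, `n` with multiplicity `c n`), padded with
zeros at the beginning. -/
def gbuild (a m : ℕ) (c : ℕ → ℕ) : Fin a → ℕ :=
  fun j => ∑ n ∈ Finset.Icc 1 m, if a ≤ n + (j : ℕ) then c n else 0

/-- `1`-indexed extension of a tuple, with value `0` at `0` and out of range. -/
def gext (a : ℕ) (g : Fin a → ℕ) : ℕ → ℕ :=
  fun t => if h : 1 ≤ t ∧ t ≤ a then g ⟨t - 1, by omega⟩ else 0

/-- Multiplicity of the part `n` in the nondecreasing tuple `g`. -/
def delta (a : ℕ) (g : Fin a → ℕ) : ℕ → ℕ :=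
  fun n => gext a g (a + 1 - n) - gext a g (a - n)

lemma gbuild_mono {a m : ℕ} (c : ℕ → ℕ) : Monotone (gbuild a m c) := by
  intro j j' hjj'
  apply Finset.sum_le_sum
  intro n _
  have hv : (j : ℕ) ≤ (j' : ℕ) := hjj'
  by_cases h : a ≤ n + (j : ℕ)
  · rw [if_pos h, if_pos (by omega)]
  · rw [if_neg h]
    exact Nat.zero_le _

lemma gbuild_le {a m : ℕ} (c : ℕ → ℕ) (j : Fin a) :
    gbuild a m c j ≤ ∑ n ∈ Finset.Icc 1 m, c n := by
  apply Finset.sum_le_sum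
  intro n _
  split <;> simp

lemma sum_gbuild {a m : ℕ} (hm : m ≤ a) (c : ℕ → ℕ) :
    ∑ j : Fin a, gbuild a m c j = ∑ n ∈ Finset.Icc 1 m, n * c n := by
  unfold gbuild
  rw [Finset.sum_comm]
  refine Finset.sum_congr rfl fun n hn => ?_
  have hn' := Finset.mem_Icc.mp hn
  exact count_ite a n (c n) (by omega)

lemma gext_mono {a : ℕ} {g : Fin a → ℕ} (hg : Monotone g) {t t' : ℕ}
    (h : t ≤ t') (h' : t' ≤ a) : gext a g t ≤ gext a g t' := by
  unfold gext
  split_ifs with h1 h2 h2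
  · exact hg (by simp only [Fin.mk_le_mk]; omega)
  · omega
  · exact Nat.zero_le _
  · exact le_rfl

lemma pad_zero {a m : ℕ} (hma : m < a) {g : Fin a → ℕ} (hg : Monotone g)
    (hsum : ∑ j : Fin a, g j ≤ m) : g ⟨a - m - 1, by omega⟩ = 0 := by
  by_contra hne
  have h1 : 1 ≤ g ⟨a - m - 1, by omega⟩ := Nat.one_le_iff_ne_zero.mpr hne
  have h2 : (m + 1) * 1 ≤ ∑ j : Fin a, g j := by
    rw [← count_ite a (m + 1) 1 (by omega)]
    apply Finset.sum_le_sum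
    intro j _
    by_cases hj : a ≤ m + 1 + (j : ℕ)
    · rw [if_pos hj]
      refine h1.trans (hg ?_)
      rw [Fin.le_def]
      simp only [Fin.val_mk]
      omega
    · rw [if_neg hj]
      exact Nat.zero_le _
  omega

lemma telescope (h : ℕ → ℕ) (n₀ : ℕ)
    (hanti : ∀ i j, n₀ ≤ i → i ≤ j → h j ≤ h i) :
    ∀ M, n₀ ≤ M + 1 → ∑ n ∈ Finset.Icc n₀ M, (h n - h (n + 1)) = h n₀ - h (M + 1) := by
  intro M
  induction M with
  | zero =>
      intro hM
      interval_cases n₀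
      · simp
      · simp
  | succ M ih =>
      intro hM
      by_cases hc : n₀ = M + 2
      · have hc' : n₀ = M + 1 + 1 := by omega
        rw [Finset.Icc_eq_empty (by omega), Finset.sum_empty, hc']
        omega
      · have hn₀ : n₀ ≤ M + 1 := by omega
        rw [Finset.sum_Icc_succ_top hn₀, ih hn₀]
        have e1 : h (M + 1) ≤ h n₀ := hanti _ _ le_rfl (by omega)
        have e2 : h (M + 1 + 1) ≤ h (M + 1) := hanti (M + 1) (M + 1 + 1) (by omega) (by omega)
        omega

lemma gbuild_delta {a m : ℕ} (hm : m ≤ a) {g : Fin a → ℕ} (hg : Monotone g)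
    (hsum : ∑ j : Fin a, g j ≤ m) : gbuild a m (delta a g) = g := by
  funext j
  have hj : (j : ℕ) < a := j.isLt
  unfold gbuild
  have hfilt : ∑ n ∈ Finset.Icc 1 m, (if a ≤ n + (j : ℕ) then delta a g n else 0)
      = ∑ n ∈ Finset.Icc (a - (j : ℕ)) m, delta a g n := by
    rw [← Finset.sum_filter]
    congr 1
    ext n
    simp only [Finset.mem_filter, Finset.mem_Icc]
    omega
  rw [hfilt]
  have hpad : gext a g (a - m) = 0 := by
    unfold gext
    split_ifs with h
    · exact pad_zero (by omega) hg hsum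
    · rfl
  have hHdelta : ∀ n, delta a g n = gext a g (a + 1 - n) - gext a g (a + 1 - (n + 1)) := by
    intro n
    unfold delta
    congr 2
    omega
  by_cases hc : a - (j : ℕ) ≤ m + 1
  · rw [Finset.sum_congr rfl fun n _ => hHdelta n]
    rw [telescope (fun n => gext a g (a + 1 - n)) (a - (j : ℕ))
      (fun i j' hi hij' => gext_mono hg (by omega) (by omega)) m hc]
    have h1 : a + 1 - (a - (j : ℕ)) = (j : ℕ) + 1 := by omega
    have h2 : a + 1 - (m + 1) = a - m := by omega
    rw [h1, h2, hpad, Nat.sub_zero]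
    unfold gext
    rw [dif_pos ⟨by omega, by omega⟩]
    apply congrArg
    exact Fin.ext (by simp)
  · rw [Finset.Icc_eq_empty (by omega), Finset.sum_empty]
    have hma : m < a := by omega
    have h0 : g ⟨a - m - 1, by omega⟩ = 0 := pad_zero hma hg hsum
    have := hg (show j ≤ ⟨a - m - 1, by omega⟩ from by simp only [Fin.le_def]; omega)
    omega

lemma delta_gbuild {a m : ℕ} (hm : m ≤ a) (c : ℕ → ℕ) {n : ℕ}
    (hn : n ∈ Finset.Icc 1 m) : delta a (gbuild a m c) n = c n := by
  obtain ⟨hn1, hn2⟩ := Finset.mem_Icc.mp hn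
  have hD : ∀ t, t ≤ a → gext a (gbuild a m c) t
      = ∑ n' ∈ Finset.Icc 1 m, if a + 1 ≤ n' + t then c n' else 0 := by
    intro t ht
    unfold gext gbuild
    split_ifs with h
    · refine Finset.sum_congr rfl fun n' _ => ?_
      refine if_congr ?_ rfl rfl
      simp only [Fin.val_mk]
      omega
    · symm
      apply Finset.sum_eq_zero
      intro n' hn'
      have := Finset.mem_Icc.mp hn'
      rw [if_neg (by omega)]
  unfold delta
  rw [hD _ (by omega), hD _ (by omega)]
  have e1 : ∀ n' ∈ Finset.Icc 1 m,
      (if a + 1 ≤ n' + (a + 1 - n) then c n' else 0)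
        = (if n' = n then c n' else 0) + (if a + 1 ≤ n' + (a - n) then c n' else 0) := by
    intro n' hn'
    have := Finset.mem_Icc.mp hn'
    split_ifs <;> omega
  rw [Finset.sum_congr rfl e1, Finset.sum_add_distrib,
    Finset.sum_ite_eq' (Finset.Icc 1 m) n (fun n' => c n'), if_pos hn]
  rw [Nat.add_sub_cancel]

/-! ### Power series helpers -/

lemma coeff_eq_of_dvd {d : ℕ} {A B : PowerSeries ℚ}
    (h : (X : PowerSeries ℚ) ^ (d + 1) ∣ A - B) : coeff (R := ℚ) d A = coeff (R := ℚ) d B := by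
  obtain ⟨E, hE⟩ := h
  have hAB : A = B + X ^ (d + 1) * E := by rw [← hE]; ring
  rw [hAB, map_add, PowerSeries.coeff_X_pow_mul' E (d + 1) d, if_neg (by omega), add_zero]

lemma X_pow_dvd_dFac_sub_one {e : ℕ} (he : 1 ≤ e) (k : ℤ) :
    (X : PowerSeries ℚ) ^ e ∣ dFac e k - 1 := by
  have hc : constantCoeff (R := ℚ) (1 - X ^ e) ≠ 0 := by
    rw [map_sub, map_one, map_pow, constantCoeff_X, zero_pow (by omega), sub_zero]
    exact one_ne_zero
  have hbase : ∀ B : PowerSeries ℚ, (X : PowerSeries ℚ) ^ e ∣ B - 1 →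
      ∀ t : ℕ, (X : PowerSeries ℚ) ^ e ∣ B ^ t - 1 := by
    intro B hB t
    have h2 := sub_dvd_pow_sub_pow B 1 t
    rw [one_pow] at h2
    exact hB.trans h2
  unfold dFac
  split_ifs with hk
  · apply hbase
    have h1 : (1 - (X : PowerSeries ℚ) ^ e) * (1 - X ^ e)⁻¹ = 1 :=
      PowerSeries.mul_inv_cancel _ hc
    have h2 : (1 - (X : PowerSeries ℚ) ^ e)⁻¹ - 1 = X ^ e * (1 - X ^ e)⁻¹ := by
      calc (1 - (X : PowerSeries ℚ) ^ e)⁻¹ - 1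
          = (1 - (X : PowerSeries ℚ) ^ e)⁻¹ - (1 - X ^ e) * (1 - X ^ e)⁻¹ := by rw [h1]
        _ = X ^ e * (1 - X ^ e)⁻¹ := by ring
    rw [h2]
    exact Dvd.intro _ rfl
  · apply hbase
    have h2 : (1 - (X : PowerSeries ℚ) ^ e) - 1 = -(X ^ e) := by ring
    rw [h2]
    exact (dvd_neg).mpr dvd_rfl

lemma dvd_prod_sub_one {ι : Type*} {s : Finset ι} {F : ι → PowerSeries ℚ} {D : PowerSeries ℚ}
    (h : ∀ i ∈ s, D ∣ F i - 1) : D ∣ (∏ i ∈ s, F i) - 1 := by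
  classical
  induction s using Finset.induction_on with
  | empty => simp
  | @insert x s hx ih =>
      rw [Finset.prod_insert hx]
      have h1 := h x (Finset.mem_insert_self x s)
      have h2 := ih fun i hi => h i (Finset.mem_insert_of_mem hi)
      have h3 : F x * (∏ i ∈ s, F i) - 1
          = F x * ((∏ i ∈ s, F i) - 1) + (F x - 1) := by ring
      rw [h3]
      exact dvd_add (h2.mul_left _) h1

lemma dvd_prod_sub_prod {ι : Type*} {s u : Finset ι} (hus : u ⊆ s)
    {F : ι → PowerSeries ℚ} {D : PowerSeries ℚ}
    (h : ∀ i ∈ s, i ∉ u → D ∣ F i - 1) :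
    D ∣ (∏ i ∈ s, F i) - ∏ i ∈ u, F i := by
  rw [← Finset.prod_sdiff hus]
  have h2 : D ∣ (∏ i ∈ s \ u, F i) - 1 :=
    dvd_prod_sub_one fun i hi =>
      h i (Finset.mem_sdiff.mp hi).1 (Finset.mem_sdiff.mp hi).2
  have h3 : (∏ i ∈ s \ u, F i) * (∏ i ∈ u, F i) - ∏ i ∈ u, F i
      = ((∏ i ∈ s \ u, F i) - 1) * ∏ i ∈ u, F i := by ring
  rw [h3]
  exact h2.mul_right _

lemma geom_inv (w : ℕ) (hw : 0 < w) :
    (1 - (X : PowerSeries ℚ) ^ w)⁻¹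
      = PowerSeries.mk fun i => if w ∣ i then (1 : ℚ) else 0 := by
  have hc : constantCoeff (R := ℚ) (1 - X ^ w) ≠ 0 := by
    rw [map_sub, map_one, map_pow, constantCoeff_X, zero_pow (by omega), sub_zero]
    exact one_ne_zero
  rw [PowerSeries.inv_eq_iff_mul_eq_one hc]
  ext n
  rw [mul_sub, mul_one, map_sub, PowerSeries.coeff_one, mul_comm,
    PowerSeries.coeff_X_pow_mul' (PowerSeries.mk fun i => if w ∣ i then (1 : ℚ) else 0) w n,
    PowerSeries.coeff_mk]
  by_cases h0 : n = 0
  · subst h0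
    rw [if_pos (dvd_zero w), if_neg (by omega), if_pos rfl]
    ring
  · rw [if_neg h0]
    by_cases h1 : w ≤ n
    · have hiff : w ∣ n ↔ w ∣ n - w := by
        constructor
        · intro h
          exact Nat.dvd_sub h dvd_rfl
        · intro h
          have h2 : w ∣ n - w + w := Nat.dvd_add h dvd_rfl
          rwa [Nat.sub_add_cancel h1] at h2
      rw [if_pos h1, PowerSeries.coeff_mk]
      by_cases h2 : w ∣ n
      · rw [if_pos h2, if_pos (hiff.mp h2)]; ring
      · rw [if_neg h2, if_neg fun hh => h2 (hiff.mpr hh)]; ring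
    · rw [if_neg h1, if_neg fun h2 => h1 (Nat.le_of_dvd (by omega) h2), sub_zero]

lemma coeff_Q {r : ℕ} (hr : 1 ≤ r) (m i : ℕ) :
    coeff (R := ℚ) i (∏ n ∈ Finset.Icc 1 m, (1 - (X : PowerSeries ℚ) ^ (r * n))⁻¹)
      = ((Finset.finsuppAntidiag (Finset.Icc 1 m) i).filter
          (fun l => ∀ n ∈ Finset.Icc 1 m, r * n ∣ l n)).card := by
  rw [PowerSeries.coeff_prod]
  have hcong : ∀ l ∈ Finset.finsuppAntidiag (Finset.Icc 1 m) i,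
      (∏ n ∈ Finset.Icc 1 m, coeff (R := ℚ) (l n) ((1 - (X : PowerSeries ℚ) ^ (r * n))⁻¹))
        = if (∀ n ∈ Finset.Icc 1 m, r * n ∣ l n) then (1 : ℚ) else 0 := by
    intro l _
    rw [← Finset.prod_boole]
    refine Finset.prod_congr rfl fun n hn => ?_
    have hn1 := (Finset.mem_Icc.mp hn).1
    rw [geom_inv (r * n) (by positivity), PowerSeries.coeff_mk]
  rw [Finset.sum_congr rfl hcong, Finset.sum_boole]
  congr!

lemma sum_fin_add_one (a : ℕ) : ∑ j : Fin a, ((j : ℕ) + 1) = a * (a + 1) / 2 := by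
  rw [Fin.sum_univ_eq_sum_range (fun t => t + 1) a]
  have h : ∑ t ∈ Finset.range a, (t + 1) = ∑ t ∈ Finset.range (a + 1), t := by
    rw [Finset.sum_range_succ' (fun t => t) a, add_zero]
  rw [h, Finset.sum_range_id, Nat.add_sub_cancel, Nat.mul_comm]

/-! ### Strictly monotone tuples -/

lemma strictMono_gap {a : ℕ} {f : Fin a → ℕ} (hf : StrictMono f) :
    ∀ (t : ℕ) (ht : t < a) (i : Fin a), (i : ℕ) ≤ t → f i + (t - (i : ℕ)) ≤ f ⟨t, ht⟩ := by
  intro t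
  induction t with
  | zero =>
      intro ht i hi
      have : i = ⟨0, ht⟩ := Fin.ext (by simp only [Fin.val_mk]; omega)
      subst this
      simp
  | succ t ih =>
      intro ht i hi
      rcases Nat.lt_or_ge (i : ℕ) (t + 1) with h | h
      · have h1 := ih (by omega) i (by omega)
        have h2 : f ⟨t, by omega⟩ < f ⟨t + 1, ht⟩ := hf (by simp [Fin.lt_def])
        omega
      · have : i = ⟨t + 1, ht⟩ := Fin.ext (by simp only [Fin.val_mk]; omega)
        subst this
        simp

lemma mem_strictTuples {a N : ℕ} {f : Fin a → ℕ} :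
    f ∈ strictTuples a N ↔ StrictMono f ∧ ∀ j, 1 ≤ f j ∧ f j ≤ N := by
  unfold strictTuples
  rw [Finset.mem_filter, Fintype.mem_piFinset]
  simp only [Finset.mem_Icc]
  constructor
  · rintro ⟨h1, h2⟩
    exact ⟨h2, fun j => h1 j⟩
  · rintro ⟨h1, h2⟩
    exact ⟨fun j => h2 j, h1⟩

/-- Key congruence: if `f` is strictly increasing with small "excess", then the multiset
`{f j}` covers an initial segment `[1,d]`, and the product `∏ dFac (f j) k` agrees with
`∏_{n=1}^{d'} dFac n k` in degrees `≤ d`. -/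
lemma coeff_prod_dFac {a : ℕ} {f : Fin a → ℕ} (hf : StrictMono f)
    (hlow : ∀ j : Fin a, (j : ℕ) + 1 ≤ f j) (k : ℤ) {d d' : ℕ} (hdd' : d ≤ d')
    (H : d + ∑ j : Fin a, (f j - ((j : ℕ) + 1)) ≤ a) :
    coeff (R := ℚ) d (∏ j, dFac (f j) k) = coeff (R := ℚ) d (∏ n ∈ Finset.Icc 1 d', dFac n k) := by
  have ha : 1 ≤ a ∨ d = 0 := by
    rcases Nat.eq_zero_or_pos a with h | h
    · right; omega
    · left; omega
  have hda : d ≤ a := by omega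
  -- surjectivity onto [1, d]
  have key : ∀ n, 1 ≤ n → n ≤ d → ∃ j : Fin a, f j = n := by
    intro n h1 h2
    have ha1 : 1 ≤ a := by omega
    by_contra hno
    push_neg at hno
    obtain ⟨jlast, hjlast⟩ : ∃ j : Fin a, (j : ℕ) = a - 1 := ⟨⟨a - 1, by omega⟩, rfl⟩
    have hlastlow := hlow jlast
    have hlast : n < f jlast := by
      have hne := hno jlast
      omega
    set s : Finset (Fin a) := Finset.univ.filter (fun j : Fin a => n < f j) with hs
    have hsne : s.Nonempty := ⟨jlast, Finset.mem_filter.mpr ⟨Finset.mem_univ _, hlast⟩⟩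
    set cv : Fin a := s.min' hsne with hcv
    have hcv_mem : n < f cv := (Finset.mem_filter.mp (s.min'_mem hsne)).2
    have hcv_min : ∀ j : Fin a, n < f j → cv ≤ j := fun j hj =>
      s.min'_le j (Finset.mem_filter.mpr ⟨Finset.mem_univ _, hj⟩)
    have hcva : (cv : ℕ) < a := cv.isLt
    have hcn : (cv : ℕ) < n := by
      rcases Nat.eq_zero_or_pos (cv : ℕ) with h0 | h0
      · omega
      · obtain ⟨jp, hjp⟩ : ∃ j : Fin a, (j : ℕ) = (cv : ℕ) - 1 :=
          ⟨⟨(cv : ℕ) - 1, by omega⟩, rfl⟩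
        have hlp := hlow jp
        have hnp := hno jp
        have hnotp : ¬ n < f jp := by
          intro hcon
          have hle := hcv_min jp hcon
          rw [Fin.le_def] at hle
          omega
        omega
    have hsum : a - (cv : ℕ) ≤ ∑ j : Fin a, (f j - ((j : ℕ) + 1)) := by
      have h3 : (a - (cv : ℕ)) * 1 ≤ ∑ j : Fin a, (f j - ((j : ℕ) + 1)) := by
        rw [← count_ite a (a - (cv : ℕ)) 1 (by omega)]
        apply Finset.sum_le_sum
        intro j _
        by_cases hj : a ≤ a - (cv : ℕ) + (j : ℕ)
        · rw [if_pos hj]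
          have hcvj : (cv : ℕ) ≤ (j : ℕ) := by omega
          have hgap := strictMono_gap hf (j : ℕ) j.isLt cv hcvj
          simp only [Fin.eta] at hgap
          omega
        · rw [if_neg hj]
          exact Nat.zero_le _
      omega
    omega
  -- reduce the tuple product to indices with f j ≤ d
  set u : Finset (Fin a) := Finset.univ.filter (fun j => f j ≤ d) with hu
  have h1 : coeff (R := ℚ) d (∏ j, dFac (f j) k) = coeff (R := ℚ) d (∏ j ∈ u, dFac (f j) k) := by
    apply coeff_eq_of_dvd
    apply dvd_prod_sub_prod (Finset.filter_subset _ _)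
    intro j _ hj
    have hfj : d + 1 ≤ f j := by
      by_contra hcon
      exact hj (Finset.mem_filter.mpr ⟨Finset.mem_univ _, by omega⟩)
    exact (pow_dvd_pow X hfj).trans (X_pow_dvd_dFac_sub_one (by omega) k)
  have h2 : ∏ j ∈ u, dFac (f j) k = ∏ n ∈ Finset.Icc 1 d, dFac n k := by
    apply Finset.prod_bij (fun j _ => f j)
    · intro j hj
      rw [Finset.mem_Icc]
      exact ⟨by have := hlow j; omega, (Finset.mem_filter.mp hj).2⟩
    · intro j1 _ j2 _ he
      exact hf.injective he
    · intro n hn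
      obtain ⟨hn1, hn2⟩ := Finset.mem_Icc.mp hn
      obtain ⟨j, hj⟩ := key n hn1 hn2
      exact ⟨j, Finset.mem_filter.mpr ⟨Finset.mem_univ _, by omega⟩, hj⟩
    · intro j _
      rfl
  have h3 : coeff (R := ℚ) d (∏ n ∈ Finset.Icc 1 d, dFac n k)
      = coeff (R := ℚ) d (∏ n ∈ Finset.Icc 1 d', dFac n k) := by
    symm
    apply coeff_eq_of_dvd
    apply dvd_prod_sub_prod (Finset.Icc_subset_Icc le_rfl hdd')
    intro n hn hn'
    have h4 := Finset.mem_Icc.mp hn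
    have h5 : d + 1 ≤ n := by
      by_contra hcon
      exact hn' (Finset.mem_Icc.mpr ⟨h4.1, by omega⟩)
    exact (pow_dvd_pow X h5).trans (X_pow_dvd_dFac_sub_one (by omega) k)
  rw [h1, h2, h3]

/-! ### The bijection between tuples in a fiber and multiplicity functions -/

lemma tup_mono_aux {a : ℕ} {f : Fin a → ℕ} (hmono : StrictMono f)
    (hlow : ∀ j : Fin a, (j : ℕ) + 1 ≤ f j) :
    Monotone (fun j : Fin a => f j - ((j : ℕ) + 1)) := by
  intro j j' hjj'
  have hvv : (j : ℕ) ≤ (j' : ℕ) := hjj'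
  have hgap := strictMono_gap hmono (j' : ℕ) j'.isLt j hvv
  simp only [Fin.eta] at hgap
  have := hlow j
  simp only
  omega

def tupToFun (a m r : ℕ) (f : Fin a → ℕ) : ℕ →₀ ℕ :=
  Finsupp.onFinset (Finset.Icc 1 m)
    (fun n => if n ∈ Finset.Icc 1 m then
        r * n * delta a (fun j => f j - ((j : ℕ) + 1)) n else 0)
    (fun n h => by by_contra hc; simp only [if_neg hc] at h; exact h rfl)

lemma tupToFun_apply (a m r : ℕ) (f : Fin a → ℕ) (n : ℕ) :
    tupToFun a m r f n = if n ∈ Finset.Icc 1 m then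
      r * n * delta a (fun j => f j - ((j : ℕ) + 1)) n else 0 := rfl

def funToTup (a m r : ℕ) (l : ℕ →₀ ℕ) : Fin a → ℕ :=
  fun j => (j : ℕ) + 1 + gbuild a m (fun n => l n / (r * n)) j

section Bij

variable {a m r N i : ℕ}

lemma tupToFun_mem (hr : 1 ≤ r) (hm : m ≤ a) (him : i ≤ m)
    {f : Fin a → ℕ} (hmono : StrictMono f) (hlow : ∀ j : Fin a, (j : ℕ) + 1 ≤ f j)
    (hfi : r * ∑ j : Fin a, (f j - ((j : ℕ) + 1)) = i) :
    tupToFun a m r f ∈ (Finset.finsuppAntidiag (Finset.Icc 1 m) i).filter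
      (fun l => ∀ n ∈ Finset.Icc 1 m, r * n ∣ l n) := by
  have hgmono : Monotone (fun j : Fin a => f j - ((j : ℕ) + 1)) := tup_mono_aux hmono hlow
  have hsgle : ∑ j : Fin a, (f j - ((j : ℕ) + 1)) ≤ m := by
    have h1 : (∑ j : Fin a, (f j - ((j : ℕ) + 1))) ≤ r * ∑ j : Fin a, (f j - ((j : ℕ) + 1)) :=
      Nat.le_mul_of_pos_left _ (by omega)
    omega
  simp only [Finset.mem_filter]
  refine ⟨Finset.mem_finsuppAntidiag.mpr ⟨?_, Finsupp.support_onFinset_subset⟩, ?_⟩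
  · calc ∑ n ∈ Finset.Icc 1 m, tupToFun a m r f n
        = ∑ n ∈ Finset.Icc 1 m, r * (n * delta a (fun j => f j - ((j : ℕ) + 1)) n) := by
          refine Finset.sum_congr rfl fun n hn => ?_
          rw [tupToFun_apply, if_pos hn, mul_assoc]
      _ = r * ∑ n ∈ Finset.Icc 1 m, n * delta a (fun j => f j - ((j : ℕ) + 1)) n :=
          (Finset.mul_sum _ _ _).symm
      _ = r * ∑ j : Fin a, gbuild a m (delta a (fun j => f j - ((j : ℕ) + 1))) j := by
          rw [sum_gbuild hm]
      _ = r * ∑ j : Fin a, (f j - ((j : ℕ) + 1)) := by rw [gbuild_delta hm hgmono hsgle]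
      _ = i := hfi
  · intro n hn
    rw [tupToFun_apply, if_pos hn]
    exact dvd_mul_right _ _

lemma funToTup_mem (hr : 1 ≤ r) (hm : m ≤ a) (him : i ≤ m) (hNa : m + a ≤ N)
    {l : ℕ →₀ ℕ}
    (hl : l ∈ (Finset.finsuppAntidiag (Finset.Icc 1 m) i).filter
      (fun l => ∀ n ∈ Finset.Icc 1 m, r * n ∣ l n)) :
    funToTup a m r l ∈ (strictTuples a N).filter
      (fun f => r * ∑ j : Fin a, (f j - ((j : ℕ) + 1)) = i) := by
  simp only [Finset.mem_filter] at hl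
  obtain ⟨hl1, hl2⟩ := hl
  rw [Finset.mem_finsuppAntidiag] at hl1
  obtain ⟨hlsum, hlsupp⟩ := hl1
  have hcl : ∀ n ∈ Finset.Icc 1 m, r * n * (l n / (r * n)) = l n := by
    intro n hn
    exact Nat.mul_div_cancel' (hl2 n hn)
  have hcle : ∀ n ∈ Finset.Icc 1 m, l n / (r * n) ≤ l n := fun n _ => Nat.div_le_self _ _
  have hgb_le : ∀ j : Fin a, gbuild a m (fun n => l n / (r * n)) j ≤ m := by
    intro j
    calc gbuild a m (fun n => l n / (r * n)) j
        ≤ ∑ n ∈ Finset.Icc 1 m, l n / (r * n) := gbuild_le _ j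
      _ ≤ ∑ n ∈ Finset.Icc 1 m, l n := Finset.sum_le_sum hcle
      _ = i := hlsum
      _ ≤ m := him
  rw [Finset.mem_filter]
  constructor
  · rw [mem_strictTuples]
    constructor
    · intro j j' hjj'
      have h1 := gbuild_mono (m := m) (fun n => l n / (r * n)) (le_of_lt hjj')
      have hv : (j : ℕ) < (j' : ℕ) := hjj'
      simp only [funToTup]
      omega
    · intro j
      simp only [funToTup]
      have h1 := hgb_le j
      have h2 : (j : ℕ) + 1 ≤ a := j.isLt
      constructor
      · omega
      · omega
  · have hsg2 : ∑ j : Fin a, (funToTup a m r l j - ((j : ℕ) + 1))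
        = ∑ j : Fin a, gbuild a m (fun n => l n / (r * n)) j := by
      refine Finset.sum_congr rfl fun j _ => ?_
      simp only [funToTup]
      omega
    rw [hsg2, sum_gbuild hm]
    calc r * ∑ n ∈ Finset.Icc 1 m, n * (l n / (r * n))
        = ∑ n ∈ Finset.Icc 1 m, r * n * (l n / (r * n)) := by
          rw [Finset.mul_sum]
          exact Finset.sum_congr rfl fun n _ => by ring
      _ = ∑ n ∈ Finset.Icc 1 m, l n := Finset.sum_congr rfl hcl
      _ = i := hlsum

lemma left_inverse_bij (hr : 1 ≤ r) (hm : m ≤ a) (him : i ≤ m)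
    {f : Fin a → ℕ} (hmono : StrictMono f) (hlow : ∀ j : Fin a, (j : ℕ) + 1 ≤ f j)
    (hfi : r * ∑ j : Fin a, (f j - ((j : ℕ) + 1)) = i) :
    funToTup a m r (tupToFun a m r f) = f := by
  have hgmono : Monotone (fun j : Fin a => f j - ((j : ℕ) + 1)) := tup_mono_aux hmono hlow
  have hsgle : ∑ j : Fin a, (f j - ((j : ℕ) + 1)) ≤ m := by
    have h1 : (∑ j : Fin a, (f j - ((j : ℕ) + 1))) ≤ r * ∑ j : Fin a, (f j - ((j : ℕ) + 1)) :=
      Nat.le_mul_of_pos_left _ (by omega)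
    omega
  funext j
  simp only [funToTup]
  have hgb : gbuild a m (fun n => tupToFun a m r f n / (r * n)) j
      = gbuild a m (delta a (fun j => f j - ((j : ℕ) + 1))) j := by
    simp only [gbuild]
    refine Finset.sum_congr rfl fun n hn => ?_
    have hn1 := (Finset.mem_Icc.mp hn).1
    have e : tupToFun a m r f n / (r * n) = delta a (fun j => f j - ((j : ℕ) + 1)) n := by
      rw [tupToFun_apply, if_pos hn, Nat.mul_div_cancel_left _ (by positivity)]
    simp only [e]
  rw [hgb, gbuild_delta hm hgmono hsgle]
  have := hlow j
  show (j : ℕ) + 1 + (f j - ((j : ℕ) + 1)) = f j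
  omega

lemma right_inverse_bij (hr : 1 ≤ r) (hm : m ≤ a)
    {l : ℕ →₀ ℕ}
    (hl : l ∈ (Finset.finsuppAntidiag (Finset.Icc 1 m) i).filter
      (fun l => ∀ n ∈ Finset.Icc 1 m, r * n ∣ l n)) :
    tupToFun a m r (funToTup a m r l) = l := by
  simp only [Finset.mem_filter] at hl
  obtain ⟨hl1, hl2⟩ := hl
  rw [Finset.mem_finsuppAntidiag] at hl1
  obtain ⟨hlsum, hlsupp⟩ := hl1
  ext n
  rw [tupToFun_apply]
  by_cases hn : n ∈ Finset.Icc 1 m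
  · rw [if_pos hn]
    have hgfun : (fun j : Fin a => funToTup a m r l j - ((j : ℕ) + 1))
        = gbuild a m (fun n => l n / (r * n)) := by
      funext j
      simp only [funToTup]
      omega
    rw [hgfun, delta_gbuild hm _ hn]
    exact Nat.mul_div_cancel' (hl2 n hn)
  · rw [if_neg hn]
    symm
    by_contra hc0
    exact hn (hlsupp (Finsupp.mem_support_iff.mpr fun h => hc0 h))

lemma card_fiber (ha : 1 ≤ a) (hr : 1 ≤ r) (hm : m ≤ a) (him : i ≤ m) (hNa : m + a ≤ N) :
    ((strictTuples a N).filter (fun f => r * ∑ j : Fin a, (f j - ((j : ℕ) + 1)) = i)).card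
      = ((Finset.finsuppAntidiag (Finset.Icc 1 m) i).filter
          (fun l => ∀ n ∈ Finset.Icc 1 m, r * n ∣ l n)).card := by
  have hprops : ∀ f ∈ (strictTuples a N).filter
      (fun f => r * ∑ j : Fin a, (f j - ((j : ℕ) + 1)) = i),
      StrictMono f ∧ (∀ j : Fin a, (j : ℕ) + 1 ≤ f j) ∧
        r * ∑ j : Fin a, (f j - ((j : ℕ) + 1)) = i := by
    intro f hf
    obtain ⟨hfs, hfi⟩ := Finset.mem_filter.mp hf
    rw [mem_strictTuples] at hfs
    refine ⟨hfs.1, fun j => ?_, hfi⟩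
    obtain ⟨j0, hj0⟩ : ∃ j0 : Fin a, (j0 : ℕ) = 0 := ⟨⟨0, by omega⟩, rfl⟩
    have hgap := strictMono_gap hfs.1 (j : ℕ) j.isLt j0 (by omega)
    have h0 := (hfs.2 j0).1
    simp only [Fin.eta] at hgap
    omega
  apply Finset.card_bij' (i := fun f _ => tupToFun a m r f) (j := fun l _ => funToTup a m r l)
  · intro f hf
    obtain ⟨h1, h2, h3⟩ := hprops f hf
    exact tupToFun_mem hr hm him h1 h2 h3
  · intro l hl
    exact funToTup_mem hr hm him hNa hl
  · intro f hf
    obtain ⟨h1, h2, h3⟩ := hprops f hf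
    exact left_inverse_bij hr hm him h1 h2 h3
  · intro l hl
    exact right_inverse_bij hr hm hl

end Bij

end EtaAux

open EtaAux

/-- Theorem 1.2 (1), first part.  For `a, r ∈ ℕ` (positive) and `k ∈ ℤ`,
`q^{-ra(a+1)/2} 𝒜_{a,k,r}(q) = ∏_{n≥1} 1/((1-q^{rn})(1-q^n)^k) + O(q^{a+1})`:
for every `0 ≤ m ≤ a`, the coefficient `c_{a,k,r}(m + ra(a+1)/2)` equals the coefficient of
`q^m` in `∏_{n≥1} (1-q^{rn})⁻¹ (1-q^n)^{-k}` (factors with `n > m` do not affect this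
coefficient, so the infinite product may be truncated at `n = m`). -/
theorem A_approximates_eta_quotient (a r : ℕ) (ha : 1 ≤ a) (hr : 1 ≤ r) (k : ℤ)
    (m : ℕ) (hm : m ≤ a) :
    Acoeff a k r (m + r * (a * (a + 1) / 2)) =
      PowerSeries.coeff (R := ℚ) m
        (∏ n ∈ Finset.Icc 1 m, ((1 - (X : PowerSeries ℚ) ^ (r * n))⁻¹ * dFac n k)) := by
  classical
  set T := a * (a + 1) / 2 with hT
  set N := m + r * T with hN
  have hTa : a ≤ T := by
    rw [hT, Nat.le_div_iff_mul_le (by norm_num)]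
    nlinarith
  have hNa : m + a ≤ N := by
    have : T ≤ r * T := Nat.le_mul_of_pos_left T (by omega)
    omega
  set P := ∏ n ∈ Finset.Icc 1 m, dFac n k with hP
  have hmem : ∀ f ∈ strictTuples a N,
      StrictMono f ∧ ∀ j : Fin a, (j : ℕ) + 1 ≤ f j ∧ f j ≤ N := by
    intro f hf
    rw [mem_strictTuples] at hf
    refine ⟨hf.1, fun j => ⟨?_, (hf.2 j).2⟩⟩
    obtain ⟨j0, hj0⟩ : ∃ j0 : Fin a, (j0 : ℕ) = 0 := ⟨⟨0, by omega⟩, rfl⟩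
    have hgap := strictMono_gap hf.1 (j : ℕ) j.isLt j0 (by omega)
    have h0 := (hf.2 j0).1
    simp only [Fin.eta] at hgap
    omega
  have hsum_f : ∀ f ∈ strictTuples a N,
      r * ∑ j : Fin a, f j = r * ∑ j : Fin a, (f j - ((j : ℕ) + 1)) + r * T := by
    intro f hf
    have hl := (hmem f hf).2
    have hsplit : ∑ j : Fin a, f j = (∑ j : Fin a, (f j - ((j : ℕ) + 1))) + T := by
      rw [hT, ← sum_fin_add_one a, ← Finset.sum_add_distrib]
      apply Finset.sum_congr rfl
      intro j _
      have := (hl j).1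
      omega
    rw [hsplit]
    ring
  have hterm : ∀ f ∈ strictTuples a N,
      PowerSeries.coeff (R := ℚ) N ((X : PowerSeries ℚ) ^ (r * ∑ j : Fin a, f j) * ∏ j, dFac (f j) k)
        = if r * ∑ j : Fin a, (f j - ((j : ℕ) + 1)) ≤ m then
            coeff (R := ℚ) (m - r * ∑ j : Fin a, (f j - ((j : ℕ) + 1))) P else 0 := by
    intro f hf
    rw [PowerSeries.coeff_X_pow_mul', hsum_f f hf]
    by_cases hc : r * ∑ j : Fin a, (f j - ((j : ℕ) + 1)) ≤ m
    · rw [if_pos (by omega), if_pos hc]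
      have harg : N - (r * ∑ j : Fin a, (f j - ((j : ℕ) + 1)) + r * T)
          = m - r * ∑ j : Fin a, (f j - ((j : ℕ) + 1)) := by omega
      rw [harg, hP]
      have hsg_le : (∑ j : Fin a, (f j - ((j : ℕ) + 1)))
          ≤ r * ∑ j : Fin a, (f j - ((j : ℕ) + 1)) := Nat.le_mul_of_pos_left _ (by omega)
      exact coeff_prod_dFac (hmem f hf).1 (fun j => ((hmem f hf).2 j).1) k
        (by omega) (by omega)
    · rw [if_neg (by omega), if_neg hc]
  unfold Acoeff
  rw [Finset.sum_congr rfl hterm, ← Finset.sum_filter]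
  have hmaps : ∀ f ∈ (strictTuples a N).filter
      (fun f => r * ∑ j : Fin a, (f j - ((j : ℕ) + 1)) ≤ m),
      r * ∑ j : Fin a, (f j - ((j : ℕ) + 1)) ∈ Finset.range (m + 1) := fun f hf =>
    Finset.mem_range.mpr (by have := (Finset.mem_filter.mp hf).2; omega)
  rw [← Finset.sum_fiberwise_of_maps_to hmaps
    (fun f => coeff (R := ℚ) (m - r * ∑ j : Fin a, (f j - ((j : ℕ) + 1))) P)]
  rw [Finset.prod_mul_distrib, PowerSeries.coeff_mul,
    Finset.Nat.sum_antidiagonal_eq_sum_range_succ_mk]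
  apply Finset.sum_congr rfl
  intro i hi
  have him : i ≤ m := by have := Finset.mem_range.mp hi; omega
  have hconst : ∀ f ∈ ((strictTuples a N).filter
      (fun f => r * ∑ j : Fin a, (f j - ((j : ℕ) + 1)) ≤ m)).filter
        (fun f => r * ∑ j : Fin a, (f j - ((j : ℕ) + 1)) = i),
      coeff (R := ℚ) (m - r * ∑ j : Fin a, (f j - ((j : ℕ) + 1))) P = coeff (R := ℚ) (m - i) P := by
    intro f hf
    rw [(Finset.mem_filter.mp hf).2]
  rw [Finset.sum_congr rfl hconst, Finset.sum_const, nsmul_eq_mul, coeff_Q hr m i]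
  congr 1
  have hfib : ((strictTuples a N).filter
      (fun f => r * ∑ j : Fin a, (f j - ((j : ℕ) + 1)) ≤ m)).filter
        (fun f => r * ∑ j : Fin a, (f j - ((j : ℕ) + 1)) = i)
      = (strictTuples a N).filter (fun f => r * ∑ j : Fin a, (f j - ((j : ℕ) + 1)) = i) := by
    rw [Finset.filter_filter]
    apply Finset.filter_congr
    intro f _
    constructor
    · rintro ⟨-, h⟩; exact h
    · intro h; exact ⟨by omega, h⟩
  rw [hfib]
  exact_mod_cast congrArg (Nat.cast (R := ℚ)) (card_fiber ha hr hm him hNa)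
end
end

section
/- Let a, r, s ∈ ℕ and k ∈ ℤ. Then q^{-a(a+1)(r+2ar+3s)/6}·ℬ_{a,k,r,s}(q) = ∏_{n≥1} 1/(1−q^n)^k + O(q^{a+1}); that is, for every integer 0 ≤ m ≤ a, the coefficient d_{a,k,r,s}(m + a(a+1)(r+2ar+3s)/6) equals the coefficient of q^m in the formal power series ∏_{n≥1} (1−q^n)^{-k}. -/
open PowerSeries Finset
open scoped Classical

noncomputable section

/-- The coefficient `d_{a,k,r,s}(N)` of `q^N` in
`ℬ_{a,k,r,s}(q) = Σ_{1≤n₁<⋯<n_a} q^{r(n₁²+⋯+n_a²)+s(n₁+⋯+n_a)} / ∏_j (1-q^{n_j})^k`.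
Since `r, s ≥ 1`, tuples containing an entry `> N` contribute `0` to the coefficient of `q^N`,
so the (q-adically convergent) infinite sum can be truncated to entries in `[1, N]`. -/
def Bcoeff (a : ℕ) (k : ℤ) (r s : ℕ) (N : ℕ) : ℚ :=
  ∑ f ∈ strictTuples a N,
    PowerSeries.coeff N
      ((X : PowerSeries ℚ) ^ (r * (∑ j, (f j) ^ 2) + s * ∑ j, f j) * ∏ j, dFac (f j) k)

/-! ### Auxiliary lemmas -/

lemma coeff_eq_zero_of_X_pow_dvd {m : ℕ} {P : PowerSeries ℚ}
    (h : (X : PowerSeries ℚ) ^ (m + 1) ∣ P) : PowerSeries.coeff m P = 0 :=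
  (PowerSeries.X_pow_dvd_iff.mp h) m (Nat.lt_succ_self m)

lemma X_pow_dvd_dFac_sub_one {n : ℕ} (hn : 1 ≤ n) (k : ℤ) :
    (X : PowerSeries ℚ) ^ n ∣ dFac n k - 1 := by
  have hu : constantCoeff (1 - (X : PowerSeries ℚ) ^ n) ≠ 0 := by
    simp [zero_pow (by omega : n ≠ 0)]
  have hbase : (X : PowerSeries ℚ) ^ n ∣ (1 - (X : PowerSeries ℚ) ^ n) - 1 := by
    simp
  have hinv : (X : PowerSeries ℚ) ^ n ∣ (1 - (X : PowerSeries ℚ) ^ n)⁻¹ - 1 := by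
    have h1 : (1 - (X : PowerSeries ℚ) ^ n)⁻¹ - 1
        = (1 - (X : PowerSeries ℚ) ^ n)⁻¹ * ((X : PowerSeries ℚ) ^ n) := by
      calc (1 - (X : PowerSeries ℚ) ^ n)⁻¹ - 1
          = (1 - (X : PowerSeries ℚ) ^ n)⁻¹
            - (1 - (X : PowerSeries ℚ) ^ n)⁻¹ * (1 - (X : PowerSeries ℚ) ^ n) := by
            rw [PowerSeries.inv_mul_cancel _ hu]
        _ = (1 - (X : PowerSeries ℚ) ^ n)⁻¹ * ((X : PowerSeries ℚ) ^ n) := by ring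
    rw [h1]
    exact Dvd.dvd.mul_left dvd_rfl _
  unfold dFac
  split
  · have h2 := sub_dvd_pow_sub_pow ((1 - (X : PowerSeries ℚ) ^ n)⁻¹) 1 k.toNat
    simpa using dvd_trans hinv h2
  · have h2 := sub_dvd_pow_sub_pow (1 - (X : PowerSeries ℚ) ^ n) 1 (-k).toNat
    simpa using dvd_trans hbase h2

lemma X_pow_dvd_prod_sub_one {ι : Type*} {S : Finset ι} {g : ι → PowerSeries ℚ}
    {D : PowerSeries ℚ} (h : ∀ i ∈ S, D ∣ g i - 1) : D ∣ (∏ i ∈ S, g i) - 1 := by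
  induction S using Finset.cons_induction with
  | empty => simp
  | cons i S hi ih =>
    rw [Finset.prod_cons]
    have h1 : g i * ∏ j ∈ S, g j - 1 = g i * ((∏ j ∈ S, g j) - 1) + (g i - 1) := by ring
    rw [h1]
    exact dvd_add (Dvd.dvd.mul_left (ih fun j hj => h j (Finset.mem_cons_of_mem hj)) _)
      (h i (Finset.mem_cons_self i S))

lemma six_mul_S (a r s : ℕ) :
    6 * (r * ∑ j ∈ Finset.range a, (j + 1) ^ 2 + s * ∑ j ∈ Finset.range a, (j + 1))
      = a * (a + 1) * (r + 2 * a * r + 3 * s) := by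
  induction a with
  | zero => simp
  | succ n ih =>
    rw [Finset.sum_range_succ, Finset.sum_range_succ]
    ring_nf at ih ⊢
    linarith [ih]

lemma strictMono_lb {a : ℕ} {f : Fin a → ℕ} (hf : StrictMono f) (h1 : ∀ j, 1 ≤ f j) :
    ∀ (i : ℕ) (hi : i < a), i + 1 ≤ f ⟨i, hi⟩ := by
  intro i
  induction i with
  | zero => intro hi; exact h1 _
  | succ n ih =>
    intro hi
    have hn : n < a := by omega
    have h2 : f ⟨n, hn⟩ < f ⟨n + 1, hi⟩ := hf (by simp [Fin.lt_def])
    have h3 := ih hn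
    omega

lemma eq_min_of_last_le {a : ℕ} (ha : 1 ≤ a) {f : Fin a → ℕ} (hf : StrictMono f)
    (h1 : ∀ j, 1 ≤ f j) (hlast : f ⟨a - 1, by omega⟩ ≤ a) :
    f = fun j : Fin a => (j : ℕ) + 1 := by
  have key : ∀ (d i : ℕ) (hi : i < a), i + 1 + d = a → f ⟨i, hi⟩ = i + 1 := by
    intro d
    induction d with
    | zero =>
      intro i hi he
      have h2 := strictMono_lb hf h1 i hi
      have h3 : (⟨i, hi⟩ : Fin a) = ⟨a - 1, by omega⟩ := by
        apply Fin.ext; simp; omega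
      rw [h3] at h2 ⊢
      omega
    | succ e ihe =>
      intro i hi he
      have hi1 : i + 1 < a := by omega
      have h2 := ihe (i + 1) hi1 (by omega)
      have h3 : f ⟨i, hi⟩ < f ⟨i + 1, hi1⟩ := hf (by simp [Fin.lt_def])
      have h4 := strictMono_lb hf h1 i hi
      omega
  funext j
  have := key (a - 1 - j.val) j.val j.isLt (by omega)
  simpa using this

lemma prod_range_eq_prod_Icc (a : ℕ) (g : ℕ → PowerSeries ℚ) :
    ∏ i ∈ Finset.range a, g (i + 1) = ∏ n ∈ Finset.Icc 1 a, g n := by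
  induction a with
  | zero => simp
  | succ n ih => rw [Finset.prod_range_succ, ih, Finset.prod_Icc_succ_top (by omega)]

lemma coeff_prod_Icc_trunc (m a : ℕ) (hm : m ≤ a) (k : ℤ) :
    PowerSeries.coeff m (∏ n ∈ Finset.Icc 1 a, dFac n k)
      = PowerSeries.coeff m (∏ n ∈ Finset.Icc 1 m, dFac n k) := by
  have hsub : Finset.Icc 1 m ⊆ Finset.Icc 1 a := Finset.Icc_subset_Icc_right hm
  rw [← Finset.prod_sdiff hsub]
  have hdvd : (X : PowerSeries ℚ) ^ (m + 1)
      ∣ (∏ n ∈ Finset.Icc 1 a \ Finset.Icc 1 m, dFac n k) - 1 := by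
    apply X_pow_dvd_prod_sub_one
    intro n hn
    obtain ⟨hn1, hn2⟩ := Finset.mem_sdiff.mp hn
    have h1 := Finset.mem_Icc.mp hn1
    have h2 : ¬ (1 ≤ n ∧ n ≤ m) := by simpa [Finset.mem_Icc] using hn2
    have hn3 : m + 1 ≤ n := by omega
    exact dvd_trans (pow_dvd_pow _ hn3) (X_pow_dvd_dFac_sub_one (by omega) k)
  obtain ⟨c, hc⟩ := hdvd
  have heq : (∏ n ∈ Finset.Icc 1 a \ Finset.Icc 1 m, dFac n k)
        * ∏ n ∈ Finset.Icc 1 m, dFac n k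
      = (∏ n ∈ Finset.Icc 1 m, dFac n k)
        + (X : PowerSeries ℚ) ^ (m + 1) * (c * ∏ n ∈ Finset.Icc 1 m, dFac n k) := by
    have hB : (∏ n ∈ Finset.Icc 1 a \ Finset.Icc 1 m, dFac n k)
        = 1 + (X : PowerSeries ℚ) ^ (m + 1) * c := by
      linear_combination hc
    rw [hB]; ring
  rw [heq, map_add, coeff_eq_zero_of_X_pow_dvd (dvd_mul_right _ _), add_zero]

/-! ### Main theorem -/

/-- Theorem 1.2 (1), second part.  For `a, r, s ∈ ℕ` (positive) and `k ∈ ℤ`,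
`q^{-a(a+1)(r+2ar+3s)/6} ℬ_{a,k,r,s}(q) = ∏_{n≥1} (1-q^n)^{-k} + O(q^{a+1})`:
for every `0 ≤ m ≤ a`, the coefficient `d_{a,k,r,s}(m + a(a+1)(r+2ar+3s)/6)` equals the
coefficient of `q^m` in `∏_{n≥1} (1-q^n)^{-k}` (factors with `n > m` do not affect this
coefficient, so the infinite product may be truncated at `n = m`). -/
theorem B_approximates_eta_power (a r s : ℕ) (ha : 1 ≤ a) (hr : 1 ≤ r) (hs : 1 ≤ s) (k : ℤ)
    (m : ℕ) (hm : m ≤ a) :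
    Bcoeff a k r s (m + a * (a + 1) * (r + 2 * a * r + 3 * s) / 6) =
      PowerSeries.coeff m (∏ n ∈ Finset.Icc 1 m, dFac n k) := by
  set M2 := ∑ j ∈ Finset.range a, (j + 1) ^ 2 with hM2
  set M1 := ∑ j ∈ Finset.range a, (j + 1) with hM1
  have hMdiv : a * (a + 1) * (r + 2 * a * r + 3 * s) / 6 = r * M2 + s * M1 := by
    rw [← six_mul_S a r s]
    exact Nat.mul_div_cancel_left _ (by norm_num)
  rw [hMdiv]
  set S := r * M2 + s * M1 with hS
  set N := m + S with hN
  -- some size facts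
  have hM1a : a ≤ M1 := by
    calc a = ∑ _j ∈ Finset.range a, 1 := by simp
      _ ≤ M1 := Finset.sum_le_sum fun j _ => by omega
  have haS : a ≤ S := by
    calc a ≤ M1 := hM1a
      _ ≤ s * M1 := Nat.le_mul_of_pos_left _ hs
      _ ≤ S := Nat.le_add_left _ _
  -- the minimal tuple
  set f0 : Fin a → ℕ := fun j => (j : ℕ) + 1 with hf0
  have hf0mono : StrictMono f0 := by
    intro i j hij
    have hij' : (i : ℕ) < (j : ℕ) := hij
    simp only [f0]
    omega
  have hf0mem : f0 ∈ strictTuples a N := by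
    rw [strictTuples, Finset.mem_filter]
    refine ⟨?_, hf0mono⟩
    rw [Fintype.mem_piFinset]
    intro j
    rw [Finset.mem_Icc]
    have := j.isLt
    simp only [f0]
    omega
  -- vanishing of non-minimal terms
  have hvanish : ∀ f ∈ strictTuples a N, f ≠ f0 →
      PowerSeries.coeff N
        ((X : PowerSeries ℚ) ^ (r * (∑ j, (f j) ^ 2) + s * ∑ j, f j) * ∏ j, dFac (f j) k)
        = 0 := by
    intro f hfmem hfne
    obtain ⟨hpi, hmono⟩ := Finset.mem_filter.mp hfmem
    have h1 : ∀ j, 1 ≤ f j := by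
      intro j
      have h := Fintype.mem_piFinset.mp hpi j
      exact (Finset.mem_Icc.mp h).1
    have hlast : a + 1 ≤ f ⟨a - 1, by omega⟩ := by
      by_contra hcon
      exact hfne (eq_min_of_last_le ha hmono h1 (by omega))
    have hb2 : M2 + (2 * a + 1) ≤ ∑ j, (f j) ^ 2 := by
      have hterm : ∀ j : Fin a,
          ((j : ℕ) + 1) ^ 2 + (if j = (⟨a - 1, by omega⟩ : Fin a) then 2 * a + 1 else 0)
            ≤ (f j) ^ 2 := by
        intro j
        by_cases hj : j = (⟨a - 1, by omega⟩ : Fin a)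
        · rw [hj]
          simp only [if_pos rfl]
          have hle : a + 1 ≤ f ⟨a - 1, by omega⟩ := hlast
          calc ((a - 1 : ℕ) + 1) ^ 2 + (2 * a + 1) ≤ (a + 1) ^ 2 := by
                have : (a - 1 : ℕ) + 1 = a := by omega
                rw [this]; ring_nf; omega
            _ ≤ (f ⟨a - 1, by omega⟩) ^ 2 := Nat.pow_le_pow_left hle 2
        · rw [if_neg hj, add_zero]
          have h2 := strictMono_lb hmono h1 j.val j.isLt
          have h3 : (j : ℕ) + 1 ≤ f j := by simpa using h2
          exact Nat.pow_le_pow_left h3 2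
      calc M2 + (2 * a + 1)
          = ∑ j : Fin a, (((j : ℕ) + 1) ^ 2
              + (if j = (⟨a - 1, by omega⟩ : Fin a) then 2 * a + 1 else 0)) := by
            rw [Finset.sum_add_distrib,
              Fin.sum_univ_eq_sum_range (fun i => (i + 1) ^ 2) a,
              Finset.sum_ite_eq' Finset.univ _ (fun _ => 2 * a + 1)]
            simp [hM2]
        _ ≤ ∑ j, (f j) ^ 2 := Finset.sum_le_sum fun j _ => hterm j
    have hb1 : M1 ≤ ∑ j, f j := by
      calc M1 = ∑ j : Fin a, ((j : ℕ) + 1) :=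
            (Fin.sum_univ_eq_sum_range (fun i => i + 1) a).symm
        _ ≤ ∑ j, f j := Finset.sum_le_sum fun j _ => by
            simpa using strictMono_lb hmono h1 j.val j.isLt
    have hE : N + 1 ≤ r * (∑ j, (f j) ^ 2) + s * ∑ j, f j := by
      have e2 : r * M2 + r * (2 * a + 1) ≤ r * ∑ j, (f j) ^ 2 := by
        rw [← Nat.mul_add]; exact Nat.mul_le_mul_left r hb2
      have e1 : s * M1 ≤ s * ∑ j, f j := Nat.mul_le_mul_left s hb1
      have e3 : 2 * a + 1 ≤ r * (2 * a + 1) := Nat.le_mul_of_pos_left _ hr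
      have e4 : m + 1 ≤ r * (2 * a + 1) := le_trans (by omega) e3
      calc N + 1 = m + (r * M2 + s * M1) + 1 := by rw [hN, hS]
        _ ≤ r * M2 + r * (2 * a + 1) + s * M1 := by omega
        _ ≤ r * (∑ j, (f j) ^ 2) + s * ∑ j, f j := by omega
    apply coeff_eq_zero_of_X_pow_dvd
    exact dvd_mul_of_dvd_left (pow_dvd_pow _ hE) _
  rw [Bcoeff, Finset.sum_eq_single f0 hvanish (fun hc => absurd hf0mem hc)]
  have hsum2 : (∑ j : Fin a, (f0 j) ^ 2) = M2 := by
    simp only [f0]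
    exact Fin.sum_univ_eq_sum_range (fun i => (i + 1) ^ 2) a
  have hsum1 : (∑ j : Fin a, f0 j) = M1 := Fin.sum_univ_eq_sum_range (fun i => i + 1) a
  rw [hsum2, hsum1]
  have hprod : (∏ j : Fin a, dFac (f0 j) k) = ∏ n ∈ Finset.Icc 1 a, dFac n k := by
    have h1 : (∏ j : Fin a, dFac (f0 j) k) = ∏ i ∈ Finset.range a, dFac (i + 1) k :=
      Fin.prod_univ_eq_prod_range (fun i => dFac (i + 1) k) a
    rw [h1]
    exact prod_range_eq_prod_Icc a (fun n => dFac n k)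
  rw [hprod, hN, ← hS, PowerSeries.coeff_X_pow_mul]
  exact coeff_prod_Icc_trunc m a hm k
end
end

section
/- For every a ∈ ℕ there exist polynomials P_{a,ℓ,n} ∈ ℚ[x], indexed by integers ℓ ≥ 0 and n ≥ a(a+1)/2, each of degree at most ℓ, such that for all k ∈ ℤ, r ∈ ℕ and N ∈ ℕ₀, c_{a,k,r}(N) = Σ P_{a,ℓ,n}(k), the sum running over all pairs (ℓ, n) with ℓ ≥ 0, n ≥ a(a+1)/2 and nr + ℓ = N. Explicitly, one may take P_{a,ℓ,n}(k) = Σ ∏_{j=1}^a C(m_j + k − 2, m_j − 1), where the sum runs over all 1 ≤ n₁ < n₂ < ⋯ < n_a and m₁, …, m_a ≥ 1 with n₁+⋯+n_a = n and m₁n₁+⋯+m_an_a = n + ℓ, and C(m+k−2, m−1) denotes the polynomial (k)(k+1)⋯(k+m−2)/(m−1)! in k. -/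
open PowerSeries Finset
open scoped Classical

noncomputable section

/-- The explicit polynomial `P_{a,ℓ,n}(k) = Σ ∏_{j=1}^a C(m_j + k - 2, m_j - 1)`, the sum over
all `1 ≤ n₁ < ⋯ < n_a` and `m₁, …, m_a ≥ 1` with `n₁+⋯+n_a = n` and `m₁n₁+⋯+m_an_a = n + ℓ`,
where `C(m+k-2, m-1) = k(k+1)⋯(k+m-2)/(m-1)!` is the ascending Pochhammer polynomial in `k`
divided by `(m-1)!`.  (All such `n_j, m_j` lie in `[1, n+ℓ]`.) -/
def Ppoly (a ℓ n : ℕ) : Polynomial ℚ :=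
  ∑ p ∈ ((Fintype.piFinset fun _ : Fin a => Finset.Icc 1 (n + ℓ)) ×ˢ
          (Fintype.piFinset fun _ : Fin a => Finset.Icc 1 (n + ℓ))).filter
      (fun p => StrictMono p.1 ∧ (∑ j, p.1 j) = n ∧ (∑ j, p.1 j * p.2 j) = n + ℓ),
    ∏ j, (((p.2 j - 1).factorial : ℚ)⁻¹ • ascPochhammer ℚ (p.2 j - 1))


/-- absent in header but we can add aux defs -/
def Qp (m : ℕ) : Polynomial ℚ := ((m.factorial : ℚ)⁻¹ • ascPochhammer ℚ m)

lemma Qp_eval_nat (m t : ℕ) : (Qp m).eval (t : ℚ) = ((t + m - 1).choose m : ℚ) := by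
  rw [Qp, Polynomial.eval_smul, smul_eq_mul, ← ascPochhammer_eval_cast,
    ascPochhammer_nat_eq_ascFactorial, Nat.ascFactorial_eq_factorial_mul_choose']
  push_cast
  rw [← mul_assoc, inv_mul_cancel₀ (by exact_mod_cast (Nat.factorial_pos m).ne'), one_mul]

lemma Qp_eval_neg (m t : ℕ) : (Qp m).eval (-(t : ℚ)) = (-1) ^ m * (t.choose m : ℚ) := by
  rw [Qp, Polynomial.eval_smul, smul_eq_mul, ascPochhammer_eval_neg_eq_descPochhammer,
    descPochhammer_eval_eq_descFactorial, Nat.descFactorial_eq_factorial_mul_choose]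
  push_cast
  field_simp

def geomS (n : ℕ) : PowerSeries ℚ := mk fun m => if n ∣ m then 1 else 0

lemma one_sub_pow_mul_geomS {n : ℕ} (hn : 1 ≤ n) :
    ((1 : PowerSeries ℚ) - X ^ n) * geomS n = 1 := by
  ext m
  rw [sub_mul, one_mul, map_sub, coeff_X_pow_mul', geomS, coeff_mk, coeff_one]
  by_cases hm : m = 0
  · subst hm
    rw [if_pos (dvd_zero n), if_neg (by omega), if_pos rfl, sub_zero]
  · rw [if_neg hm]
    by_cases hle : n ≤ m
    · rw [if_pos hle, coeff_mk]
      have : n ∣ m ↔ n ∣ m - n := by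
        constructor
        · intro h; exact Nat.dvd_sub h dvd_rfl
        · intro h; have := Nat.dvd_add h dvd_rfl; rwa [Nat.sub_add_cancel hle] at this
      by_cases hd : n ∣ m
      · rw [if_pos hd, if_pos (this.mp hd), sub_self]
      · rw [if_neg hd, if_neg (fun h => hd (this.mpr h)), sub_self]
    · rw [if_neg hle, if_neg (fun h => hle (Nat.le_of_dvd (Nat.pos_of_ne_zero hm) h)), sub_zero]

lemma inv_one_sub_pow_eq_geomS {n : ℕ} (hn : 1 ≤ n) :
    ((1 : PowerSeries ℚ) - X ^ n)⁻¹ = geomS n := by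
  rw [PowerSeries.inv_eq_iff_mul_eq_one, mul_comm]
  · exact one_sub_pow_mul_geomS hn
  · simp only [map_sub, map_one, map_pow, constantCoeff_X]
    rw [zero_pow (by omega), sub_zero]
    exact one_ne_zero

lemma key_nat_sum (s t : ℕ) :
    ∑ u ∈ range (s + 1), (u + t - 1).choose u = (s + t).choose s := by
  induction s with
  | zero => simp
  | succ s ih =>
      rw [Finset.sum_range_succ, ih]
      have h1 : (s + 1 + t - 1) = s + t := by omega
      have h2 : s + 1 + t = (s + t) + 1 := by omega
      rw [h1, h2, Nat.choose_succ_succ]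

lemma sum_div_reindex {n : ℕ} (hn : 1 ≤ n) (s : ℕ) (G : ℕ → ℚ) :
    ∑ i ∈ range (n * s + 1), (if n ∣ i then G (i / n) else 0) = ∑ u ∈ range (s + 1), G u := by
  rw [← Finset.sum_filter]
  refine Finset.sum_bij' (fun i _ => i / n) (fun u _ => n * u) ?_ ?_ ?_ ?_ ?_
  · intro i hi
    simp only [mem_filter, mem_range] at hi
    simp only [mem_range]
    have := Nat.div_le_div_right (c := n) (by omega : i ≤ n * s)
    rw [Nat.mul_div_cancel_left _ (by omega : 0 < n)] at this
    omega
  · intro u hu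
    simp only [mem_range] at hu
    simp only [mem_filter, mem_range]
    exact ⟨by nlinarith, Dvd.intro u rfl⟩
  · intro i hi
    simp only [mem_filter] at hi
    exact Nat.mul_div_cancel' hi.2
  · intro u hu
    exact Nat.mul_div_cancel_left _ (by omega)
  · intro i hi
    rfl

lemma coeff_geomS_pow {n : ℕ} (hn : 1 ≤ n) (t M : ℕ) :
    coeff (R := ℚ) M (geomS n ^ t) = if n ∣ M then ((M / n + t - 1).choose (M / n) : ℚ) else 0 := by
  induction t generalizing M with
  | zero =>
      rw [pow_zero, coeff_one]
      by_cases hM : M = 0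
      · subst hM; simp
      · rw [if_neg hM]
        by_cases hd : n ∣ M
        · rw [if_pos hd]
          have h1 : 1 ≤ M / n := Nat.one_le_div_iff (by omega) |>.mpr (Nat.le_of_dvd (by omega) hd)
          rw [Nat.choose_eq_zero_of_lt (by omega), Nat.cast_zero]
        · rw [if_neg hd]
  | succ t ih =>
      rw [pow_succ, coeff_mul, Finset.Nat.sum_antidiagonal_eq_sum_range_succ_mk]
      by_cases hd : n ∣ M
      · obtain ⟨s, hs⟩ := hd
        subst hs
        have hcongr : ∀ i ∈ range (n * s + 1),
            (coeff (R := ℚ) i (geomS n ^ t)) * (coeff (R := ℚ) (n * s - i) (geomS n)) =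
            (if n ∣ i then ((i / n + t - 1).choose (i / n) : ℚ) else 0) := by
          intro i hi
          simp only [mem_range] at hi
          rw [ih, geomS, coeff_mk]
          by_cases h : n ∣ i
          · simp [h, Nat.dvd_sub (dvd_mul_right n s) h]
          · simp [h]
        rw [Finset.sum_congr rfl hcongr,
          sum_div_reindex hn s (fun u => (((u + t - 1).choose u : ℕ) : ℚ)),
          if_pos (dvd_mul_right n s), Nat.mul_div_cancel_left _ (by omega : 0 < n)]
        have harg : s + (t + 1) - 1 = s + t := by omega
        rw [harg]
        exact_mod_cast key_nat_sum s t
      · rw [if_neg hd]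
        refine Finset.sum_eq_zero fun i hi => ?_
        simp only [mem_range] at hi
        dsimp only
        rw [ih]
        by_cases h2 : n ∣ i
        · have hnd : ¬ n ∣ (M - i) := by
            intro h
            have h3 := Nat.dvd_add h2 h
            rw [Nat.add_sub_cancel' (by omega : i ≤ M)] at h3
            exact hd h3
          rw [if_pos h2, geomS, coeff_mk, if_neg hnd, mul_zero]
        · rw [if_neg h2, zero_mul]

lemma coeff_one_sub_Xpow_pow {n : ℕ} (hn : 1 ≤ n) (t M : ℕ) :
    coeff (R := ℚ) M (((1 : PowerSeries ℚ) - X ^ n) ^ t) =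
      if n ∣ M then ((-1) ^ (M / n) * (t.choose (M / n)) : ℚ) else 0 := by
  have hexp : ((1 : PowerSeries ℚ) - X ^ n) ^ t =
      ∑ i ∈ range (t + 1), ((-1) ^ i * (t.choose i : ℚ)) • X ^ (n * i) := by
    rw [sub_eq_add_neg, add_comm, add_pow]
    refine Finset.sum_congr rfl fun i hi => ?_
    rw [one_pow, neg_pow, mul_one, ← pow_mul, smul_eq_C_mul, map_mul, map_pow, map_neg, map_one,
      map_natCast]
    ring
  rw [hexp, map_sum]
  have hterm : ∀ i, coeff (R := ℚ) M (((-1) ^ i * (t.choose i : ℚ)) • X ^ (n * i)) =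
      (-1) ^ i * (t.choose i : ℚ) * (if M = n * i then 1 else 0) := by
    intro i
    rw [LinearMap.map_smul, coeff_X_pow, smul_eq_mul]
  rw [Finset.sum_congr rfl (fun i _ => hterm i)]
  by_cases hd : n ∣ M
  · by_cases hle : M / n ≤ t
    · rw [Finset.sum_eq_single (M / n), if_pos (Nat.mul_div_cancel' hd).symm, mul_one, if_pos hd]
      · intro j hj hne
        rw [if_neg, mul_zero]
        intro hMj
        exact hne (by rw [hMj, Nat.mul_div_cancel_left _ (by omega : 0 < n)])
      · intro hmem
        exact absurd (mem_range.mpr (by omega)) hmem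
    · rw [if_pos hd, Nat.choose_eq_zero_of_lt (by omega), Nat.cast_zero, mul_zero]
      refine Finset.sum_eq_zero fun i hi => ?_
      simp only [mem_range] at hi
      rw [if_neg, mul_zero]
      intro hMi
      have : M / n = i := by rw [hMi, Nat.mul_div_cancel_left _ (by omega : 0 < n)]
      omega
  · rw [if_neg hd]
    refine Finset.sum_eq_zero fun i hi => ?_
    rw [if_neg, mul_zero]
    intro hMi
    exact hd ⟨i, hMi⟩

lemma coeff_dFac {n : ℕ} (hn : 1 ≤ n) (k : ℤ) (M : ℕ) :
    coeff (R := ℚ) M (dFac n k) = if n ∣ M then (Qp (M / n)).eval (k : ℚ) else 0 := by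
  rw [dFac]
  split_ifs with hk hd hd
  · rw [inv_one_sub_pow_eq_geomS hn, coeff_geomS_pow hn, if_pos hd]
    have hk' : ((k : ℚ)) = ((k.toNat : ℕ) : ℚ) := by
      have : k = (k.toNat : ℤ) := by omega
      exact_mod_cast this
    rw [hk', Qp_eval_nat]
    congr 2
    omega
  · rw [inv_one_sub_pow_eq_geomS hn, coeff_geomS_pow hn, if_neg hd]
  · rw [coeff_one_sub_Xpow_pow hn, if_pos hd]
    have hk' : ((k : ℚ)) = -(((-k).toNat : ℕ) : ℚ) := by
      have : k = -(((-k).toNat : ℕ) : ℤ) := by omega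
      exact_mod_cast this
    rw [hk', Qp_eval_neg]
  · rw [coeff_one_sub_Xpow_pow hn, if_neg hd]


lemma coeff_prod_dFac {a : ℕ} (f : Fin a → ℕ) (hf : ∀ j, 1 ≤ f j) (k : ℤ) (d : ℕ) :
    coeff (R := ℚ) d (∏ j, dFac (f j) k) =
      ∑ m ∈ Fintype.piFinset (fun _ : Fin a => Finset.Icc 1 (d + 1)),
        if (∑ j, f j * (m j - 1)) = d then ∏ j, (Qp (m j - 1)).eval (k : ℚ) else 0 := by
  rw [PowerSeries.coeff_prod]
  have h1 : ∀ l ∈ finsuppAntidiag (univ : Finset (Fin a)) d,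
      (∏ j, coeff (R := ℚ) (l j) (dFac (f j) k)) =
      if ∀ j ∈ (univ : Finset (Fin a)), f j ∣ l j then
        ∏ j, (Qp (l j / f j)).eval (k : ℚ) else 0 := by
    intro l _
    rw [Finset.prod_congr rfl (fun j _ => coeff_dFac (hf j) k (l j)), Finset.prod_ite_zero]
    convert rfl using 2 <;> simp
  rw [Finset.sum_congr rfl h1, ← Finset.sum_filter, ← Finset.sum_filter]
  refine Finset.sum_bij' (fun l _ => fun j => l j / f j + 1)
    (fun m _ => Finsupp.equivFunOnFinite.symm (fun j => f j * (m j - 1))) ?_ ?_ ?_ ?_ ?_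
  · intro l hl
    simp only [Finset.mem_filter, Finset.mem_finsuppAntidiag, Finset.mem_univ, forall_true_left,
      forall_const] at hl
    obtain ⟨⟨hsum, _⟩, hdvd⟩ := hl
    simp only [Finset.mem_filter, Fintype.mem_piFinset, Finset.mem_Icc]
    constructor
    · intro j
      have hle : l j ≤ d := by
        rw [← hsum]
        exact Finset.single_le_sum (fun i _ => Nat.zero_le _) (Finset.mem_univ j)
      have h2 := Nat.div_le_self (l j) (f j)
      exact ⟨Nat.succ_le_succ (Nat.zero_le _), Nat.succ_le_succ (le_trans h2 hle)⟩
    · rw [← hsum]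
      refine Finset.sum_congr rfl fun j _ => ?_
      rw [Nat.add_sub_cancel, Nat.mul_div_cancel' (hdvd j)]
  · intro m hm
    simp only [Finset.mem_filter, Fintype.mem_piFinset, Finset.mem_Icc] at hm
    obtain ⟨hmem, hsum⟩ := hm
    simp only [Finset.mem_filter, Finset.mem_finsuppAntidiag, Finset.mem_univ, forall_true_left,
      forall_const, Finsupp.coe_equivFunOnFinite_symm]
    exact ⟨⟨hsum, Finset.subset_univ _⟩, fun j => dvd_mul_right _ _⟩
  · intro l hl
    simp only [Finset.mem_filter, Finset.mem_finsuppAntidiag] at hl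
    ext j
    simp only [Finsupp.coe_equivFunOnFinite_symm, Nat.add_sub_cancel]
    exact Nat.mul_div_cancel' (hl.2 j (Finset.mem_univ j))
  · intro m hm
    simp only [Finset.mem_filter, Fintype.mem_piFinset, Finset.mem_Icc] at hm
    funext j
    simp only [Finsupp.coe_equivFunOnFinite_symm]
    rw [Nat.mul_div_cancel_left _ (by have := hf j; omega : 0 < f j)]
    have := (hm.1 j).1
    omega
  · intro l hl
    refine Finset.prod_congr rfl fun j _ => ?_
    rw [Nat.add_sub_cancel]

lemma strictMono_sum_lb {a : ℕ} {g : Fin a → ℕ} (hg : StrictMono g) (h1 : ∀ j, 1 ≤ g j) :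
    a * (a + 1) / 2 ≤ ∑ j, g j := by
  have key : ∀ i : ℕ, ∀ h : i < a, i + 1 ≤ g ⟨i, h⟩ := by
    intro i
    induction i with
    | zero => intro h; exact h1 _
    | succ i ih =>
        intro h
        have hlt : g ⟨i, by omega⟩ < g ⟨i + 1, h⟩ := hg (by simp [Fin.lt_def])
        have := ih (by omega)
        omega
  have hsum : (∑ i ∈ range a, (i + 1)) ≤ ∑ j, g j := by
    rw [← Fin.sum_univ_eq_sum_range (fun i => i + 1) a]
    exact Finset.sum_le_sum fun j _ => key j.1 j.2
  have h3 : ∑ i ∈ range (a + 1), i = ∑ i ∈ range a, (i + 1) := by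
    rw [Finset.sum_range_succ' (fun i => i) a, Nat.add_zero]
  have h2 := Finset.sum_range_id_mul_two (a + 1)
  simp only [Nat.add_sub_cancel] at h2
  have hc : a * (a + 1) = (a + 1) * a := Nat.mul_comm _ _
  omega

/-- Theorem 1.3, `𝒜`-part, with explicit polynomials.  For `a ∈ ℕ`
(positive) there are polynomials `P_{a,ℓ,n}` of degree at most `ℓ` such that for every
`k ∈ ℤ`, `r ∈ ℕ` (positive) and `N ∈ ℕ₀` one has
`c_{a,k,r}(N) = Σ_{(ℓ,n) : ℓ ≥ 0, n ≥ a(a+1)/2, nr+ℓ = N} P_{a,ℓ,n}(k)`;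
one may take the explicit polynomials `Ppoly`. -/
theorem A_coeff_polynomial_family (a : ℕ) (ha : 1 ≤ a) :
    (∀ ℓ n : ℕ, (Ppoly a ℓ n).degree ≤ (ℓ : ℕ)) ∧
    ∀ (k : ℤ) (r : ℕ), 1 ≤ r → ∀ N : ℕ,
      Acoeff a k r N =
        ∑ p ∈ (Finset.range (N + 1) ×ˢ Finset.range (N + 1)).filter
            (fun p => a * (a + 1) / 2 ≤ p.2 ∧ p.2 * r + p.1 = N),
          (Ppoly a p.1 p.2).eval (k : ℚ) := by
  constructor
  · -- degree bound
    intro ℓ n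
    rw [Ppoly]
    refine (Polynomial.degree_sum_le _ _).trans (Finset.sup_le fun p hp => ?_)
    simp only [Finset.mem_filter, Finset.mem_product, Fintype.mem_piFinset, Finset.mem_Icc] at hp
    obtain ⟨⟨hg, hm⟩, hmono, hsum1, hsum2⟩ := hp
    have hnat : (∑ j, (p.2 j - 1)) ≤ ℓ := by
      have h1 : ∀ j : Fin a, p.2 j - 1 + p.1 j ≤ p.1 j * p.2 j := by
        intro j
        have hg1 := (hg j).1
        have hm1 := (hm j).1
        calc p.2 j - 1 + p.1 j ≤ p.1 j * (p.2 j - 1) + p.1 j :=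
              Nat.add_le_add_right (Nat.le_mul_of_pos_left _ (by omega : 0 < p.1 j)) _
          _ = p.1 j * (p.2 j - 1 + 1) := by ring
          _ = p.1 j * p.2 j := by rw [Nat.sub_add_cancel hm1]
      have h2 : (∑ j, (p.2 j - 1 + p.1 j)) ≤ ∑ j, p.1 j * p.2 j :=
        Finset.sum_le_sum fun j _ => h1 j
      rw [Finset.sum_add_distrib, hsum1, hsum2] at h2
      omega
    calc (∏ j, (((p.2 j - 1).factorial : ℚ)⁻¹ • ascPochhammer ℚ (p.2 j - 1))).degree
        ≤ ∑ j, (((p.2 j - 1).factorial : ℚ)⁻¹ • ascPochhammer ℚ (p.2 j - 1)).degree :=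
          Polynomial.degree_prod_le _ _
      _ ≤ ∑ j : Fin a, ((p.2 j - 1 : ℕ) : WithBot ℕ) :=
          Finset.sum_le_sum fun j _ => (Polynomial.degree_smul_le _ _).trans
            (Polynomial.degree_le_natDegree.trans (by rw [ascPochhammer_natDegree]))
      _ = ((∑ j, (p.2 j - 1) : ℕ) : WithBot ℕ) := by rw [Nat.cast_sum]
      _ ≤ ((ℓ : ℕ) : WithBot ℕ) := by exact_mod_cast hnat
  · intro k r hr N
    -- Step 1: rewrite each `f`-term of `Acoeff` as a sum over `m`-tuples.
    have step1 : ∀ f ∈ strictTuples a N,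
        coeff (R := ℚ) N ((X : PowerSeries ℚ) ^ (r * ∑ j, f j) * ∏ j, dFac (f j) k) =
        ∑ m ∈ Fintype.piFinset (fun _ : Fin a => Finset.Icc 1 N),
          if r * (∑ j, f j) + (∑ j, f j * (m j - 1)) = N then
            ∏ j, (Qp (m j - 1)).eval (k : ℚ) else 0 := by
      intro f hf
      simp only [strictTuples, Finset.mem_filter, Fintype.mem_piFinset, Finset.mem_Icc] at hf
      obtain ⟨hf1, hfmono⟩ := hf
      have hfpos : ∀ j, 1 ≤ f j := fun j => (hf1 j).1
      have hsumf : 1 ≤ ∑ j, f j := by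
        have h0 : (0 : ℕ) < a := ha
        calc 1 ≤ f ⟨0, h0⟩ := hfpos _
          _ ≤ ∑ j, f j := Finset.single_le_sum (fun j _ => Nat.zero_le _) (Finset.mem_univ _)
      have he1 : 1 ≤ r * ∑ j, f j := by
        calc 1 ≤ ∑ j, f j := hsumf
          _ ≤ r * ∑ j, f j := Nat.le_mul_of_pos_left _ (by omega)
      rw [mul_comm, PowerSeries.coeff_mul_X_pow']
      by_cases hle : r * (∑ j, f j) ≤ N
      · rw [if_pos hle, coeff_prod_dFac f hfpos k (N - r * ∑ j, f j)]
        rw [Finset.sum_congr rfl (fun m _ => if_congr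
            (by omega : (∑ j, f j * (m j - 1)) = N - r * ∑ j, f j ↔
              r * (∑ j, f j) + (∑ j, f j * (m j - 1)) = N) rfl rfl)]
        refine Finset.sum_subset (fun m hm => ?_) (fun m hm hnot => ?_)
        · simp only [Fintype.mem_piFinset, Finset.mem_Icc] at hm ⊢
          intro j
          have := hm j
          omega
        · simp only [Fintype.mem_piFinset, Finset.mem_Icc] at hm hnot
          push_neg at hnot
          obtain ⟨j, hj⟩ := hnot
          have hj2 := hm j
          have hbig : N - r * (∑ j, f j) + 1 < m j := by omega
          rw [if_neg]
          intro hcontra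
          have h1 : m j - 1 ≤ f j * (m j - 1) := Nat.le_mul_of_pos_left _ (by have := hfpos j; omega)
          have h2 : f j * (m j - 1) ≤ ∑ i, f i * (m i - 1) :=
            Finset.single_le_sum (f := fun i => f i * (m i - 1))
              (fun i _ => Nat.zero_le _) (Finset.mem_univ j)
          omega
      · rw [if_neg hle]
        symm
        refine Finset.sum_eq_zero fun m hm => ?_
        rw [if_neg (by omega)]
    rw [Acoeff, Finset.sum_congr rfl step1]
    have hkey : ∀ (g m : Fin a → ℕ), (∀ j, 1 ≤ m j) →
        (∑ j, g j * (m j - 1)) + (∑ j, g j) = ∑ j, g j * m j := by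
      intro g m hm
      rw [← Finset.sum_add_distrib]
      refine Finset.sum_congr rfl fun j _ => ?_
      have h1 : m j - 1 + 1 = m j := Nat.succ_pred_eq_of_pos (hm j)
      calc g j * (m j - 1) + g j = g j * (m j - 1 + 1) := by ring
        _ = g j * m j := by rw [h1]
    -- LHS as a sum over a filtered product
    rw [show (∑ f ∈ strictTuples a N, ∑ m ∈ Fintype.piFinset (fun _ : Fin a => Finset.Icc 1 N),
          if r * (∑ j, f j) + (∑ j, f j * (m j - 1)) = N then
            ∏ j, (Qp (m j - 1)).eval (k : ℚ) else 0) =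
        ∑ q ∈ ((strictTuples a N) ×ˢ Fintype.piFinset (fun _ : Fin a => Finset.Icc 1 N)).filter
            (fun q => r * (∑ j, q.1 j) + (∑ j, q.1 j * (q.2 j - 1)) = N),
          ∏ j, (Qp (q.2 j - 1)).eval (k : ℚ) from by
      rw [Finset.sum_filter, Finset.sum_product]]
    -- RHS: evaluate the polynomials
    have rhs_eq : ∀ p ∈ (Finset.range (N + 1) ×ˢ Finset.range (N + 1)).filter
            (fun p : ℕ × ℕ => a * (a + 1) / 2 ≤ p.2 ∧ p.2 * r + p.1 = N),
        (Ppoly a p.1 p.2).eval (k : ℚ) =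
        ∑ w ∈ ((Fintype.piFinset fun _ : Fin a => Finset.Icc 1 (p.2 + p.1)) ×ˢ
              (Fintype.piFinset fun _ : Fin a => Finset.Icc 1 (p.2 + p.1))).filter
            (fun w => StrictMono w.1 ∧ (∑ j, w.1 j) = p.2 ∧ (∑ j, w.1 j * w.2 j) = p.2 + p.1),
          ∏ j, (Qp (w.2 j - 1)).eval (k : ℚ) := by
      intro p _
      rw [Ppoly, Polynomial.eval_finset_sum]
      refine Finset.sum_congr rfl fun w _ => ?_
      rw [Polynomial.eval_prod]
      exact Finset.prod_congr rfl fun j _ => by rw [Qp]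
    rw [Finset.sum_congr rfl rhs_eq, Finset.sum_sigma']
    -- the bijection
    refine Finset.sum_bij'
      (fun q _ => ⟨((∑ j, q.1 j * q.2 j) - (∑ j, q.1 j), ∑ j, q.1 j), q⟩)
      (fun x _ => x.2) ?_ ?_ ?_ ?_ ?_
    · -- forward membership
      intro q hq
      simp only [Finset.mem_filter, Finset.mem_product, strictTuples, Fintype.mem_piFinset,
        Finset.mem_Icc] at hq
      obtain ⟨⟨⟨hg, hmono⟩, hm⟩, hcond⟩ := hq
      have hSS := hkey q.1 q.2 (fun j => (hm j).1)
      have hgr : (∑ j, q.1 j) ≤ r * ∑ j, q.1 j := Nat.le_mul_of_pos_left _ (by omega)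
      have hc : (∑ j, q.1 j) * r = r * ∑ j, q.1 j := Nat.mul_comm _ _
      simp only [Finset.mem_sigma, Finset.mem_filter, Finset.mem_product, Finset.mem_range,
        Fintype.mem_piFinset, Finset.mem_Icc]
      have hle1 : ∀ j, q.1 j ≤ ∑ i, q.1 i := fun j =>
        Finset.single_le_sum (f := fun i => q.1 i) (fun i _ => Nat.zero_le _) (Finset.mem_univ j)
      have hle2 : ∀ j, q.1 j * q.2 j ≤ ∑ i, q.1 i * q.2 i := fun j =>
        Finset.single_le_sum (f := fun i => q.1 i * q.2 i) (fun i _ => Nat.zero_le _)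
          (Finset.mem_univ j)
      have hle3 : ∀ j, q.2 j ≤ q.1 j * q.2 j := fun j =>
        Nat.le_mul_of_pos_left _ (by have := (hg j).1; omega)
      refine ⟨⟨⟨by omega, by omega⟩, strictMono_sum_lb hmono (fun j => (hg j).1), by omega⟩,
        ⟨fun j => ?_, fun j => ?_⟩, hmono, trivial, by omega⟩
      · have := (hg j).1; have := hle1 j; omega
      · have := (hm j).1; have := hle2 j; have := hle3 j; omega
    · -- backward membership
      intro x hx
      simp only [Finset.mem_sigma, Finset.mem_filter, Finset.mem_product, Finset.mem_range,
        Fintype.mem_piFinset, Finset.mem_Icc] at hx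
      obtain ⟨⟨⟨hl, hn⟩, hge, hNr⟩, ⟨hg, hm⟩, hmono, hsum1, hsum2⟩ := hx
      have hSS := hkey x.2.1 x.2.2 (fun j => (hm j).1)
      have hnr : x.1.2 ≤ x.1.2 * r := Nat.le_mul_of_pos_right _ (by omega)
      have hc : x.1.2 * r = r * x.1.2 := Nat.mul_comm _ _
      simp only [Finset.mem_filter, Finset.mem_product, strictTuples, Fintype.mem_piFinset,
        Finset.mem_Icc]
      refine ⟨⟨⟨fun j => ?_, hmono⟩, fun j => ?_⟩, by rw [hsum1]; omega⟩
      · have := hg j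
        omega
      · have := hm j
        omega
    · intro q hq
      rfl
    · intro x hx
      simp only [Finset.mem_sigma, Finset.mem_filter, Finset.mem_product, Finset.mem_range,
        Fintype.mem_piFinset, Finset.mem_Icc] at hx
      obtain ⟨hp, hw, hmono, hsum1, hsum2⟩ := hx
      obtain ⟨⟨ℓ₀, n₀⟩, w⟩ := x
      simp only at hsum1 hsum2 ⊢
      rw [hsum1, hsum2, Nat.add_sub_cancel_left]
    · intro q hq
      rfl
end
end

section
/- Let a, k ∈ ℕ and let P be a nonzero polynomial with nonnegative integer coefficients, no constant term, and degree at least 2. Then q^{−Σ_{j=1}^a P(j)} · 𝒞_{a,k}(P;q) = ∏_{n≥1} 1/(1−q^n)^k + O(q^{a+1}); that is, for every integer 0 ≤ m ≤ a, the coefficient of q^{m + Σ_{j=1}^a P(j)} in 𝒞_{a,k}(P;q) equals the coefficient of q^m in ∏_{n≥1} (1−q^n)^{−k}. -/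
open PowerSeries Finset
open scoped Classical

noncomputable section

/-- The coefficient of `q^N` in
`𝒞_{a,k}(P; q) = Σ_{1≤n₁<⋯<n_a} q^{P(n₁)+⋯+P(n_a)} / ∏_j (1-q^{n_j})^k`, where `P` is a
nonzero polynomial with coefficients in `ℕ₀` and `P(0) = 0`.  Such a `P` satisfies
`P(n) ≥ n` for `n ≥ 1`, so tuples containing an entry `> N` contribute `0` to the
coefficient of `q^N` and the (q-adically convergent) infinite sum may be truncated. -/
def Ccoeff (a k : ℕ) (P : Polynomial ℕ) (N : ℕ) : ℚ :=
  ∑ f ∈ strictTuples a N,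
    PowerSeries.coeff N
      ((X : PowerSeries ℚ) ^ (∑ j, P.eval (f j)) * ∏ j, dFac (f j) (k : ℤ))

lemma auxCoeffZero (g : PowerSeries ℚ) {s i : ℕ} (h : i < s) :
    PowerSeries.coeff i ((X : PowerSeries ℚ) ^ s * g) = 0 := by
  rw [PowerSeries.coeff_X_pow_mul' g s i, if_neg (by omega)]

def OneUpTo (m : ℕ) (B : PowerSeries ℚ) : Prop :=
  ∀ i ≤ m, PowerSeries.coeff i B = if i = 0 then 1 else 0

lemma OneUpTo.one {m : ℕ} : OneUpTo m 1 := by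
  intro i _; simp [PowerSeries.coeff_one]

lemma OneUpTo.mul {m : ℕ} {A B : PowerSeries ℚ} (hA : OneUpTo m A) (hB : OneUpTo m B) :
    OneUpTo m (A * B) := by
  intro i hi
  rw [PowerSeries.coeff_mul]
  rcases Nat.eq_zero_or_pos i with rfl | hpos
  · simp only [Finset.Nat.antidiagonal_zero, Finset.sum_singleton]
    rw [hA 0 (by omega), hB 0 (by omega)]; simp
  · rw [if_neg (by omega)]
    apply Finset.sum_eq_zero
    rintro ⟨p, q⟩ hpq
    rw [Finset.HasAntidiagonal.mem_antidiagonal] at hpq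
    rcases Nat.eq_zero_or_pos p with rfl | hp
    · rw [hB q (by omega), if_neg (by omega), mul_zero]
    · rw [hA p (by omega), if_neg (by omega), zero_mul]

lemma OneUpTo.pow {m k : ℕ} {A : PowerSeries ℚ} (hA : OneUpTo m A) : OneUpTo m (A ^ k) := by
  induction k with
  | zero => simpa using OneUpTo.one
  | succ n ih => rw [pow_succ]; exact ih.mul hA

lemma OneUpTo.coeff_mul_right {m : ℕ} (A : PowerSeries ℚ) {B : PowerSeries ℚ}
    (hB : OneUpTo m B) : PowerSeries.coeff m (A * B) = PowerSeries.coeff m A := by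
  rw [PowerSeries.coeff_mul, Finset.sum_eq_single (m, 0)]
  · rw [hB 0 (by omega)]; simp
  · rintro ⟨p, q⟩ hpq hne
    rw [Finset.HasAntidiagonal.mem_antidiagonal] at hpq
    have hq : q ≠ 0 := by
      rintro rfl; exact hne (by simp only [Prod.mk.injEq, and_true]; omega)
    rw [hB q (by omega), if_neg hq, mul_zero]
  · intro h; exact absurd (Finset.HasAntidiagonal.mem_antidiagonal.2 (by omega)) h

lemma oneUpTo_inv {m n : ℕ} (hn : m < n) :
    OneUpTo m ((1 - (X : PowerSeries ℚ) ^ n)⁻¹) := by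
  have hc : PowerSeries.constantCoeff (1 - (X : PowerSeries ℚ) ^ n) ≠ 0 := by
    simp only [map_sub, map_one, map_pow, PowerSeries.constantCoeff_X]
    rw [zero_pow (by omega)]; norm_num
  have key : (1 - (X : PowerSeries ℚ) ^ n)⁻¹
      = 1 + (X : PowerSeries ℚ) ^ n * (1 - (X : PowerSeries ℚ) ^ n)⁻¹ := by
    have h1 := PowerSeries.inv_mul_cancel _ hc
    have h2 : (1 - (X : PowerSeries ℚ) ^ n)⁻¹ * (1 - (X : PowerSeries ℚ) ^ n)
        = (1 - (X : PowerSeries ℚ) ^ n)⁻¹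
          - (X : PowerSeries ℚ) ^ n * (1 - (X : PowerSeries ℚ) ^ n)⁻¹ := by ring
    rw [h2] at h1
    linear_combination h1
  intro i hi
  rw [key, map_add, auxCoeffZero _ (by omega), add_zero, PowerSeries.coeff_one]

lemma evalMono (P : Polynomial ℕ) {x y : ℕ} (h : x ≤ y) : P.eval x ≤ P.eval y := by
  rw [Polynomial.eval_eq_sum_range, Polynomial.eval_eq_sum_range]
  exact Finset.sum_le_sum fun i _ => Nat.mul_le_mul_left _ (Nat.pow_le_pow_left h i)

lemma powGap {n d : ℕ} (hd : 2 ≤ d) : n ^ d + 2 * n + 1 ≤ (n + 1) ^ d := by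
  induction d, hd using Nat.le_induction with
  | base => ring_nf; omega
  | succ d hd ih =>
    have h1 : (n+1)^(d+1) = (n+1)^d * (n+1) := by ring
    have h2 : n^(d+1) = n^d * n := by ring
    have h3 : (n ^ d + 2 * n + 1) * (n + 1) ≤ (n + 1) ^ d * (n + 1) :=
      Nat.mul_le_mul_right _ ih
    have h4 : (n ^ d + 2 * n + 1) * (n + 1) = n ^ d * n + n ^ d + 2 * (n * n) + 3 * n + 1 := by
      ring
    linarith [Nat.zero_le (n ^ d), Nat.zero_le (n * n), Nat.zero_le n]

lemma evalGap (P : Polynomial ℕ) (hP : P ≠ 0) (hdeg : 2 ≤ P.natDegree) (n : ℕ) :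
    P.eval n + 2 * n + 1 ≤ P.eval (n + 1) := by
  have hc : 1 ≤ P.coeff P.natDegree := Nat.one_le_iff_ne_zero.mpr
    (Polynomial.leadingCoeff_ne_zero.mpr hP)
  set d := P.natDegree with hd
  rw [Polynomial.eval_eq_sum_range, Polynomial.eval_eq_sum_range, ← hd,
    Finset.sum_range_succ, Finset.sum_range_succ]
  have h1 : ∑ i ∈ Finset.range d, P.coeff i * n ^ i
      ≤ ∑ i ∈ Finset.range d, P.coeff i * (n+1) ^ i :=
    Finset.sum_le_sum fun i _ => Nat.mul_le_mul_left _ (Nat.pow_le_pow_left (by omega) i)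
  have h2 : P.coeff d * n ^ d + 2*n+1 ≤ P.coeff d * (n+1)^d := by
    calc P.coeff d * n ^ d + 2*n+1 ≤ P.coeff d * (n^d + 2*n+1) := by nlinarith
    _ ≤ P.coeff d * (n+1)^d := Nat.mul_le_mul_left _ (powGap hdeg)
  omega

lemma smChain {a : ℕ} {f : Fin a → ℕ} (hf : StrictMono f) :
    ∀ (d : ℕ) (i j : Fin a), (i : ℕ) + d = (j : ℕ) → f i + d ≤ f j := by
  intro d
  induction d with
  | zero =>
    intro i j h
    have hij : i = j := Fin.ext (by omega)
    subst hij; omega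
  | succ d ih =>
    intro i j h
    have hlt : (i : ℕ) + d < a := by omega
    have h1 : f i + d ≤ f ⟨(i : ℕ) + d, hlt⟩ := ih i _ rfl
    have h2 : f ⟨(i : ℕ) + d, hlt⟩ < f j := hf (by rw [Fin.lt_def]; simp; omega)
    omega

lemma prodIccShift (F : ℕ → PowerSeries ℚ) (t : ℕ) :
    ∏ n ∈ Finset.Icc 1 t, F n = ∏ i ∈ Finset.range t, F (i + 1) := by
  rw [← Finset.Ico_add_one_right_eq_Icc, Finset.prod_Ico_eq_prod_range]
  simp [add_comm]

lemma sumIccShift (F : ℕ → ℕ) (t : ℕ) :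
    ∑ n ∈ Finset.Icc 1 t, F n = ∑ i ∈ Finset.range t, F (i + 1) := by
  rw [← Finset.Ico_add_one_right_eq_Icc, Finset.sum_Ico_eq_sum_range]
  simp [add_comm]


/-- Section 5.1: the limiting behaviour of `𝒞_{a,k}(P;q)`.  Let
`a, k ∈ ℕ` (positive) and let `P` be a nonzero polynomial with coefficients in `ℕ₀`, with
no constant term and of degree at least `2`.  Then
`q^{-Σ_{j=1}^a P(j)} 𝒞_{a,k}(P;q) = ∏_{n≥1} (1-qⁿ)^{-k} + O(q^{a+1})`: for every
`0 ≤ m ≤ a`, the coefficient of `q^{m + Σ_{j=1}^a P(j)}` in `𝒞_{a,k}(P;q)` equals the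
coefficient of `q^m` in `∏_{n≥1} (1-qⁿ)^{-k}` (factors with `n > m` do not affect this
coefficient, so the infinite product may be truncated at `n = m`). -/
theorem C_approximates_eta_power (a k : ℕ) (ha : 1 ≤ a) (hk : 1 ≤ k)
    (P : Polynomial ℕ) (hP : P ≠ 0) (hP0 : P.coeff 0 = 0) (hdeg : 2 ≤ P.natDegree)
    (m : ℕ) (hm : m ≤ a) :
    Ccoeff a k P (m + ∑ j ∈ Finset.Icc 1 a, P.eval j) =
      PowerSeries.coeff m
        (∏ n ∈ Finset.Icc 1 m, ((1 - (X : PowerSeries ℚ) ^ n)⁻¹) ^ k) := by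
  set S := ∑ j ∈ Finset.Icc 1 a, P.eval j with hS
  set N := m + S with hN
  -- basic facts about P
  have hc : 1 ≤ P.coeff P.natDegree := Nat.one_le_iff_ne_zero.mpr
    (Polynomial.leadingCoeff_ne_zero.mpr hP)
  have hP1 : 1 ≤ P.eval 1 := by
    have h1 : P.coeff P.natDegree * 1 ^ P.natDegree ≤ P.eval 1 := by
      rw [Polynomial.eval_eq_sum_range]
      exact Finset.single_le_sum (f := fun i => P.coeff i * 1 ^ i)
        (fun i _ => Nat.zero_le _) (Finset.self_mem_range_succ _)
    simpa using le_trans (by simpa using hc) h1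
  have hj1 : ∀ j, 1 ≤ j → 1 ≤ P.eval j := fun j hj => le_trans hP1 (evalMono P hj)
  have haS : a ≤ S := by
    have h1 : ∑ j ∈ Finset.Icc 1 a, 1 ≤ ∑ j ∈ Finset.Icc 1 a, P.eval j :=
      Finset.sum_le_sum fun j hj => hj1 j (Finset.mem_Icc.mp hj).1
    simpa [Nat.card_Icc] using h1
  have SFin : ∑ j : Fin a, P.eval ((j : ℕ) + 1) = S := by
    rw [hS, sumIccShift]
    exact Fin.sum_univ_eq_sum_range (fun i => P.eval (i + 1)) a
  -- the canonical tuple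
  have hmem : (fun j : Fin a => (j : ℕ) + 1) ∈ strictTuples a N := by
    rw [strictTuples, Finset.mem_filter]
    constructor
    · rw [Fintype.mem_piFinset]
      intro j
      rw [Finset.mem_Icc]
      have := j.isLt
      omega
    · intro i j hij
      have := Fin.lt_def.mp hij
      simp only []
      omega
  rw [Ccoeff, Finset.sum_eq_single_of_mem _ hmem]
  · -- canonical term
    have hsum : (∑ j : Fin a, P.eval ((fun j : Fin a => (j : ℕ) + 1) j)) = S := SFin
    have hdfac : ∀ n : ℕ, dFac n (k : ℤ) = ((1 - (X : PowerSeries ℚ) ^ n)⁻¹) ^ k := by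
      intro n
      rw [dFac, if_pos (Int.natCast_nonneg k)]
      norm_num
    simp only [hsum, hdfac]
    rw [hN, PowerSeries.coeff_X_pow_mul]
    rw [prodIccShift (fun n => ((1 - (X : PowerSeries ℚ) ^ n)⁻¹) ^ k) m,
      Fin.prod_univ_eq_prod_range (fun i => ((1 - (X : PowerSeries ℚ) ^ (i + 1))⁻¹) ^ k) a,
      ← Finset.prod_range_mul_prod_Ico _ hm]
    apply OneUpTo.coeff_mul_right
    apply Finset.prod_induction _ (OneUpTo m) (fun _ _ => OneUpTo.mul) OneUpTo.one
    intro i hi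
    have : m < i + 1 := by
      have := (Finset.mem_Ico.mp hi).1
      omega
    exact (oneUpTo_inv this).pow
  · -- other tuples contribute 0
    intro f hf hne
    rw [strictTuples, Finset.mem_filter, Fintype.mem_piFinset] at hf
    obtain ⟨hfm, hsm⟩ := hf
    have hlow : ∀ j : Fin a, (j : ℕ) + 1 ≤ f j := by
      intro j
      have h0 : 1 ≤ f ⟨0, by omega⟩ := (Finset.mem_Icc.mp (hfm ⟨0, by omega⟩)).1
      have := smChain hsm (j : ℕ) ⟨0, by omega⟩ j (by simp)
      omega
    have hlast : a + 1 ≤ f ⟨a - 1, by omega⟩ := by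
      by_contra hcon
      push_neg at hcon
      apply hne
      funext j
      have h1 := hlow j
      have h2 := smChain hsm (a - 1 - (j : ℕ)) j ⟨a - 1, by omega⟩ (by simp; omega)
      have hj := j.isLt
      show f j = (j : ℕ) + 1
      omega
    have hbig : N < ∑ j : Fin a, P.eval (f j) := by
      set last : Fin a := ⟨a - 1, by omega⟩ with hlastdef
      have h3 : ∀ j : Fin a, (if j = last then a + 1 else (j : ℕ) + 1) ≤ f j := by
        intro j
        by_cases hj : j = last
        · rw [if_pos hj, hj]; exact hlast
        · rw [if_neg hj]; exact hlow j
      have h4 : ∑ j : Fin a, P.eval (if j = last then a + 1 else (j : ℕ) + 1)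
          ≤ ∑ j : Fin a, P.eval (f j) :=
        Finset.sum_le_sum fun j _ => evalMono P (h3 j)
      have h5 : ∑ j : Fin a, P.eval (if j = last then a + 1 else (j : ℕ) + 1)
          = P.eval (a + 1) + ∑ j ∈ Finset.univ.erase last, P.eval ((j : ℕ) + 1) := by
        rw [← Finset.add_sum_erase _ _ (Finset.mem_univ last), if_pos rfl]
        congr 1
        exact Finset.sum_congr rfl fun j hj =>
          by rw [if_neg (Finset.ne_of_mem_erase hj)]
      have h6 : S = P.eval a + ∑ j ∈ Finset.univ.erase last, P.eval ((j : ℕ) + 1) := by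
        rw [← SFin, ← Finset.add_sum_erase _ _ (Finset.mem_univ last)]
        congr 2
        show (last : ℕ) + 1 = a
        rw [hlastdef]
        simp
        omega
      have h7 := evalGap P hP hdeg a
      omega
    exact auxCoeffZero _ hbig
end
end

section
/- Let g : ℝ → ℂ be a C^∞ function, c ∈ ℝ, n ∈ ℕ₀, and write ζ(z) := e^{2πiz}. Let D denote the operator sending a smooth function f to z ↦ ζ(z)^{−1} f′(z). Then: (1) D^n applied to z ↦ ζ(z)^c g(z) equals z ↦ ζ(z)^{c−n} Σ_{ℓ=0}^{n} (2πi)^{n−ℓ} α_c(n,ℓ) g^{(ℓ)}(z); and (2) the n-th derivative of z ↦ ζ(z)^c g(z) equals z ↦ Σ_{ℓ=0}^{n} (2πi)^{n−ℓ} β_c(n,ℓ) ζ(z)^{c+ℓ} (D^ℓ g)(z). -/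
open scoped Real

noncomputable section

/-- The generalized Stirling numbers `S_{n,ℓ}(a,b,c)` of Howard–Schmidt, defined by the
recurrence `S_{n+1,ℓ}(a,b,c) = (aℓ - bn + c) S_{n,ℓ}(a,b,c) + S_{n,ℓ-1}(a,b,c)` with
`S_{0,0}(a,b,c) = 1` and `S_{n,ℓ}(a,b,c) = 0` for `ℓ < 0` or `ℓ > n` (the stated recursion
automatically satisfies the vanishing conditions). -/
def genStirling (a b c : ℝ) : ℕ → ℤ → ℝ
  | 0, ℓ => if ℓ = 0 then 1 else 0
  | n + 1, ℓ => (a * ℓ - b * n + c) * genStirling a b c n ℓ + genStirling a b c n (ℓ - 1)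

/-- `α_c(n,ℓ) := S_{n,ℓ}(0,1,c)`. -/
def alphaSt (c : ℝ) (n : ℕ) (ℓ : ℤ) : ℝ := genStirling 0 1 c n ℓ

/-- `β_c(n,ℓ) := S_{n,ℓ}(1,0,c)`. -/
def betaSt (c : ℝ) (n : ℕ) (ℓ : ℤ) : ℝ := genStirling 1 0 c n ℓ

/-- `ζ(z)^c = e^{2πicz}` for `z ∈ ℝ`, `c ∈ ℝ`. -/
def zetaPow (c : ℝ) (z : ℝ) : ℂ := Complex.exp (2 * Real.pi * Complex.I * c * z)

/-- The operator `D : f ↦ (z ↦ ζ(z)⁻¹ f'(z))`. -/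
def Dop (f : ℝ → ℂ) : ℝ → ℂ := fun z => (zetaPow 1 z)⁻¹ * deriv f z

lemma zetaPow_ne_zero (c z : ℝ) : zetaPow c z ≠ 0 := Complex.exp_ne_zero _
lemma zetaPow_add (a b : ℝ) (z : ℝ) : zetaPow (a + b) z = zetaPow a z * zetaPow b z := by
  rw [zetaPow, zetaPow, zetaPow, ← Complex.exp_add]
  congr 1
  push_cast
  ring
lemma hasDerivAt_zetaPow (c z : ℝ) :
    HasDerivAt (zetaPow c) (2 * Real.pi * Complex.I * c * zetaPow c z) z := by
  set k : ℂ := 2 * Real.pi * Complex.I * c with hk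
  have h : HasDerivAt (fun w : ℂ => Complex.exp (k * w)) (Complex.exp (k * z) * k) (z : ℂ) := by
    simpa using ((hasDerivAt_id (z : ℂ)).const_mul k).cexp
  have h2 := h.comp_ofReal
  have : k * zetaPow c z = Complex.exp (k * z) * k := mul_comm _ _
  rw [this]
  exact h2
lemma contDiff_zetaPow (c : ℝ) : ContDiff ℝ (⊤ : ℕ∞) (zetaPow c) :=
  (contDiff_const.mul Complex.ofRealCLM.contDiff).cexp
lemma contDiff_Dop {f : ℝ → ℂ} (hf : ContDiff ℝ (⊤ : ℕ∞) f) : ContDiff ℝ (⊤ : ℕ∞) (Dop f) := by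
  have hd : ContDiff ℝ (⊤ : ℕ∞) (deriv f) := (contDiff_infty_iff_deriv.mp hf).2
  exact ((contDiff_zetaPow 1).inv (fun z => zetaPow_ne_zero 1 z)).mul hd
lemma contDiff_Dop_iterate {f : ℝ → ℂ} (hf : ContDiff ℝ (⊤ : ℕ∞) f) (n : ℕ) :
    ContDiff ℝ (⊤ : ℕ∞) (Dop^[n] f) := by
  induction n with
  | zero => exact hf
  | succ n ih => rw [Function.iterate_succ_apply']; exact contDiff_Dop ih
lemma genStirling_neg (a b c : ℝ) (n : ℕ) {ℓ : ℤ} (h : ℓ < 0) : genStirling a b c n ℓ = 0 := by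
  induction n generalizing ℓ with
  | zero => simp [genStirling, h.ne]
  | succ n ih => rw [genStirling, ih h, ih (by omega)]; ring
lemma genStirling_gt (a b c : ℝ) (n : ℕ) {ℓ : ℤ} (h : (n : ℤ) < ℓ) : genStirling a b c n ℓ = 0 := by
  induction n generalizing ℓ with
  | zero => simp [genStirling]; omega
  | succ n ih => rw [genStirling, ih (by omega), ih (by omega)]; ring
lemma sum_helper (n : ℕ) (A d : ℤ → ℝ) (hA : A (-1) = 0) (hA' : A (n + 1) = 0)
    (T : ℕ → ℂ) (w : ℂ) :
    ∑ ℓ ∈ Finset.range (n + 2), w ^ (n + 1 - ℓ) * ((d ℓ * A ℓ + A ((ℓ : ℤ) - 1) : ℝ) : ℂ) * T ℓ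
      = ∑ ℓ ∈ Finset.range (n + 1), w ^ (n + 1 - ℓ) * ((d ℓ * A ℓ : ℝ) : ℂ) * T ℓ
        + ∑ ℓ ∈ Finset.range (n + 1), w ^ (n - ℓ) * ((A ℓ : ℝ) : ℂ) * T (ℓ + 1) := by
  have split : ∀ ℓ ∈ Finset.range (n + 2),
      w ^ (n + 1 - ℓ) * ((d ℓ * A ℓ + A ((ℓ : ℤ) - 1) : ℝ) : ℂ) * T ℓ
        = w ^ (n + 1 - ℓ) * ((d ℓ * A ℓ : ℝ) : ℂ) * T ℓ
          + w ^ (n + 1 - ℓ) * ((A ((ℓ : ℤ) - 1) : ℝ) : ℂ) * T ℓ := by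
    intro ℓ _; push_cast; ring
  rw [Finset.sum_congr rfl split, Finset.sum_add_distrib]
  congr 1
  · rw [Finset.sum_range_succ]
    have h1 : ((n + 1 : ℕ) : ℤ) = (n : ℤ) + 1 := by push_cast; ring
    rw [h1, hA']
    simp
  · rw [Finset.sum_range_succ']
    have h0 : ((0 : ℕ) : ℤ) - 1 = -1 := by norm_num
    rw [h0, hA]
    simp only [Complex.ofReal_zero, mul_zero, zero_mul, add_zero]
    refine Finset.sum_congr rfl fun ℓ hℓ => ?_
    have hc : ((ℓ + 1 : ℕ) : ℤ) - 1 = (ℓ : ℤ) := by push_cast; ring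
    rw [hc, Nat.succ_sub_succ]
lemma part1 (g : ℝ → ℂ) (hg : ContDiff ℝ (⊤ : ℕ∞) g) (c : ℝ) (n : ℕ) :
    Dop^[n] (fun z => zetaPow c z * g z) =
      fun z => zetaPow (c - n) z *
        ∑ ℓ ∈ Finset.range (n + 1),
          (2 * Real.pi * Complex.I) ^ (n - ℓ) * (alphaSt c n ℓ : ℂ) * iteratedDeriv ℓ g z := by
  induction n with
  | zero =>
    funext z
    simp [alphaSt, genStirling]
  | succ n ih =>
    rw [Function.iterate_succ_apply', ih]
    funext z
    set w : ℂ := 2 * Real.pi * Complex.I with hw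
    have hdi : ∀ ℓ : ℕ, HasDerivAt (iteratedDeriv ℓ g) (iteratedDeriv (ℓ + 1) g z) z := by
      intro ℓ
      have hdiff := (hg.differentiable_iteratedDeriv ℓ
        (by exact_mod_cast ENat.coe_lt_top ℓ)) z
      rw [iteratedDeriv_succ]
      exact hdiff.hasDerivAt
    have hsum : HasDerivAt
        (fun y => ∑ ℓ ∈ Finset.range (n + 1),
          w ^ (n - ℓ) * (alphaSt c n ℓ : ℂ) * iteratedDeriv ℓ g y)
        (∑ ℓ ∈ Finset.range (n + 1),
          w ^ (n - ℓ) * (alphaSt c n ℓ : ℂ) * iteratedDeriv (ℓ + 1) g z) z := by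
      refine HasDerivAt.fun_sum fun ℓ _ => ?_
      exact (hdi ℓ).const_mul _
    have hD := ((hasDerivAt_zetaPow (c - n) z).fun_mul hsum).deriv
    have hrec : ∀ ℓ : ℤ, alphaSt c (n + 1) ℓ = (c - n) * alphaSt c n ℓ + alphaSt c n (ℓ - 1) := by
      intro ℓ
      rw [alphaSt, genStirling, ← alphaSt, ← alphaSt]
      ring_nf
    have hS : (∑ ℓ ∈ Finset.range (n + 2),
          w ^ (n + 1 - ℓ) * (alphaSt c (n + 1) ℓ : ℂ) * iteratedDeriv ℓ g z)
        = w * ((c : ℂ) - n) * (∑ ℓ ∈ Finset.range (n + 1),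
            w ^ (n - ℓ) * (alphaSt c n ℓ : ℂ) * iteratedDeriv ℓ g z)
          + ∑ ℓ ∈ Finset.range (n + 1),
            w ^ (n - ℓ) * (alphaSt c n ℓ : ℂ) * iteratedDeriv (ℓ + 1) g z := by
      have e1 : (∑ ℓ ∈ Finset.range (n + 2),
          w ^ (n + 1 - ℓ) * (alphaSt c (n + 1) ℓ : ℂ) * iteratedDeriv ℓ g z)
        = ∑ ℓ ∈ Finset.range (n + 2), w ^ (n + 1 - ℓ) *
            (((fun _ : ℤ => c - n) ℓ * alphaSt c n ℓ + alphaSt c n ((ℓ : ℤ) - 1) : ℝ) : ℂ)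
            * iteratedDeriv ℓ g z :=
        Finset.sum_congr rfl fun ℓ _ => by rw [hrec]
      rw [e1, sum_helper n (alphaSt c n) (fun _ => c - n)
        (genStirling_neg 0 1 c n (by norm_num))
        (genStirling_gt 0 1 c n (by omega)) (fun ℓ => iteratedDeriv ℓ g z) w]
      congr 1
      rw [Finset.mul_sum]
      refine Finset.sum_congr rfl fun ℓ hℓ => ?_
      have hle : ℓ ≤ n := Nat.lt_succ_iff.mp (Finset.mem_range.mp hℓ)
      have : n + 1 - ℓ = (n - ℓ) + 1 := by omega
      rw [this, pow_succ]
      push_cast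
      ring
    have hz : zetaPow (c - n) z = zetaPow (c - (n + 1 : ℕ)) z * zetaPow 1 z := by
      rw [← zetaPow_add]
      congr 1
      push_cast
      ring
    show (zetaPow 1 z)⁻¹ * deriv _ z = _
    rw [hD, hS, hz]
    have hne := zetaPow_ne_zero 1 z
    push_cast
    field_simp
    ring
lemma part2 (g : ℝ → ℂ) (hg : ContDiff ℝ (⊤ : ℕ∞) g) (c : ℝ) (n : ℕ) :
    iteratedDeriv n (fun z => zetaPow c z * g z) =
      fun z => ∑ ℓ ∈ Finset.range (n + 1),
        (2 * Real.pi * Complex.I) ^ (n - ℓ) * (betaSt c n ℓ : ℂ) *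
          (zetaPow (c + ℓ) z * (Dop^[ℓ] g) z) := by
  induction n with
  | zero =>
    funext z
    simp [betaSt, genStirling]
  | succ n ih =>
    rw [iteratedDeriv_succ, ih]
    funext z
    set w : ℂ := 2 * Real.pi * Complex.I with hw
    have hD : ∀ ℓ : ℕ, Differentiable ℝ (Dop^[ℓ] g) :=
      fun ℓ => (contDiff_Dop_iterate hg ℓ).differentiable (by simp)
    have hsum : HasDerivAt
        (fun y => ∑ ℓ ∈ Finset.range (n + 1),
          w ^ (n - ℓ) * (betaSt c n ℓ : ℂ) * (zetaPow (c + ℓ) y * (Dop^[ℓ] g) y))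
        (∑ ℓ ∈ Finset.range (n + 1),
          w ^ (n - ℓ) * (betaSt c n ℓ : ℂ) *
            (2 * Real.pi * Complex.I * (c + ℓ : ℝ) * zetaPow (c + ℓ) z * (Dop^[ℓ] g) z
              + zetaPow (c + ℓ) z * deriv (Dop^[ℓ] g) z)) z := by
      refine HasDerivAt.fun_sum fun ℓ _ => ?_
      exact ((hasDerivAt_zetaPow (c + ℓ) z).fun_mul ((hD ℓ z).hasDerivAt)).const_mul _
    have hder : ∀ ℓ : ℕ, zetaPow (c + ℓ) z * deriv (Dop^[ℓ] g) z
        = zetaPow (c + (ℓ + 1 : ℕ)) z * (Dop^[ℓ + 1] g) z := by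
      intro ℓ
      have h1 : (Dop^[ℓ + 1] g) z = (zetaPow 1 z)⁻¹ * deriv (Dop^[ℓ] g) z := by
        rw [Function.iterate_succ_apply']; rfl
      have h2 : zetaPow (c + (ℓ + 1 : ℕ)) z = zetaPow (c + ℓ) z * zetaPow 1 z := by
        rw [← zetaPow_add]; congr 1; push_cast; ring
      rw [h1, h2]
      have hne := zetaPow_ne_zero 1 z
      field_simp
    have hrec : ∀ ℓ : ℤ, betaSt c (n + 1) ℓ = ((ℓ : ℝ) + c) * betaSt c n ℓ + betaSt c n (ℓ - 1) := by
      intro ℓ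
      rw [betaSt, genStirling, ← betaSt, ← betaSt]
      ring_nf
    have hS : (∑ ℓ ∈ Finset.range (n + 2),
          w ^ (n + 1 - ℓ) * (betaSt c (n + 1) ℓ : ℂ) * (zetaPow (c + ℓ) z * (Dop^[ℓ] g) z))
        = ∑ ℓ ∈ Finset.range (n + 1), w ^ (n + 1 - ℓ) *
              ((((ℓ : ℤ) : ℝ) + c) * betaSt c n ℓ : ℝ) * (zetaPow (c + ℓ) z * (Dop^[ℓ] g) z)
          + ∑ ℓ ∈ Finset.range (n + 1), w ^ (n - ℓ) * (betaSt c n ℓ : ℂ) *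
              (zetaPow (c + (ℓ + 1 : ℕ)) z * (Dop^[ℓ + 1] g) z) := by
      have e1 : (∑ ℓ ∈ Finset.range (n + 2),
          w ^ (n + 1 - ℓ) * (betaSt c (n + 1) ℓ : ℂ) * (zetaPow (c + ℓ) z * (Dop^[ℓ] g) z))
        = ∑ ℓ ∈ Finset.range (n + 2), w ^ (n + 1 - ℓ) *
            (((fun ℓ : ℤ => (ℓ : ℝ) + c) ℓ * betaSt c n ℓ + betaSt c n ((ℓ : ℤ) - 1) : ℝ) : ℂ)
            * (zetaPow (c + ℓ) z * (Dop^[ℓ] g) z) :=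
        Finset.sum_congr rfl fun ℓ _ => by rw [hrec]
      rw [e1, sum_helper n (betaSt c n) (fun ℓ : ℤ => (ℓ : ℝ) + c)
        (genStirling_neg 1 0 c n (by norm_num))
        (genStirling_gt 1 0 c n (by omega))
        (fun ℓ => zetaPow (c + ℓ) z * (Dop^[ℓ] g) z) w]
    rw [hsum.deriv, hS, ← Finset.sum_add_distrib]
    refine Finset.sum_congr rfl fun ℓ hℓ => ?_
    have hle : ℓ ≤ n := Nat.lt_succ_iff.mp (Finset.mem_range.mp hℓ)
    rw [hder ℓ]
    have : n + 1 - ℓ = (n - ℓ) + 1 := by omega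
    rw [this, pow_succ]
    push_cast
    ring


/-- Lemma 2.7.  Let `g : ℝ → ℂ` be `C^∞`, `c ∈ ℝ`, `n ∈ ℕ₀`.  Then
`(ζ⁻¹ ∂/∂z)ⁿ (ζ^c g) = ζ^{c-n} Σ_{ℓ=0}^n (2πi)^{n-ℓ} α_c(n,ℓ) g^{(ℓ)}` and
`∂ⁿ/∂zⁿ (ζ^c g) = Σ_{ℓ=0}^n (2πi)^{n-ℓ} β_c(n,ℓ) ζ^{c+ℓ} (ζ⁻¹ ∂/∂z)^ℓ g`. -/
theorem zetaPow_derivative_formulas (g : ℝ → ℂ) (hg : ContDiff ℝ (⊤ : ℕ∞) g)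
    (c : ℝ) (n : ℕ) :
    (Dop^[n] (fun z => zetaPow c z * g z) =
      fun z => zetaPow (c - n) z *
        ∑ ℓ ∈ Finset.range (n + 1),
          (2 * Real.pi * Complex.I) ^ (n - ℓ) * (alphaSt c n ℓ : ℂ) * iteratedDeriv ℓ g z) ∧
    (iteratedDeriv n (fun z => zetaPow c z * g z) =
      fun z => ∑ ℓ ∈ Finset.range (n + 1),
        (2 * Real.pi * Complex.I) ^ (n - ℓ) * (betaSt c n ℓ : ℂ) *
          (zetaPow (c + ℓ) z * (Dop^[ℓ] g) z)) := by
  exact ⟨part1 g hg c n, part2 g hg c n⟩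
end
end
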